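/- arXiv:1711.00172 — 7 statements merged into one kernel-verified Lean document; each statement's English description precedes it below -/
import Mathlib

section
/- There exists a set A of nonnegative integers which is an AP₃-covering sequence and satisfies limsup_{n→∞} A(n)/√n = √15, where A(n) denotes the number of elements of A that are at most n. -/
/-- `T l` is the set of integers `u·4^l + ∑_{i<l} v_i·4^i` with `u ∈ {1,2,3,4}`
and `v_i ∈ {1,2}` for `0 ≤ i ≤ l-1`. -/
def T (l : ℕ) : Set ℕ :=
  {n | ∃ u : ℕ, (1 ≤ u ∧ u ≤ 4) ∧ ∃ v : ℕ → ℕ, (∀ i, i < l → v i = 1 ∨ v i = 2) ∧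
    n = u * 4 ^ l + ∑ i ∈ Finset.range l, v i * 4 ^ i}

/-- `A = ⋃_{l ≥ 0} T_l`. -/
def A : Set ℕ := ⋃ l : ℕ, T l

/-- The counting function of a set `S` of nonnegative integers:
the number of elements of `S` that are at most `n`. -/
noncomputable def cnt (S : Set ℕ) (n : ℕ) : ℕ := (S ∩ Set.Iic n).ncard

/-- `S` is an `AP₃`-covering sequence if there is `n₀` such that every `n > n₀`
is the last term of a 3-term arithmetic progression whose first two terms lie in `S`. -/
def AP3Covering (S : Set ℕ) : Prop :=
  ∃ n₀ : ℕ, ∀ n : ℕ, n₀ < n → ∃ a ∈ S, ∃ b ∈ S, a < b ∧ b < n ∧ a + n = 2 * b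


/-- `c4 l = ∑_{i<l} 4^i`. -/
def c4 : ℕ → ℕ
  | 0 => 0
  | l+1 => 4 * c4 l + 1

lemma c4_eq (l : ℕ) : 3 * c4 l + 1 = 4 ^ l := by
  induction l with
  | zero => simp [c4]
  | succ l ih => simp only [c4, pow_succ]; omega

lemma c4_sum (l : ℕ) : ∑ i ∈ Finset.range l, 4 ^ i = c4 l := by
  induction l with
  | zero => simp [c4]
  | succ l ih =>
    rw [Finset.sum_range_succ', c4]
    simp only [pow_succ, pow_zero, ← Finset.sum_mul, ih]
    ring

lemma c4_mono : Monotone c4 := by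
  apply monotone_nat_of_le_succ
  intro n; simp [c4]; omega

/-- Moser–de Bruijn map: value of binary digits read in base 4. -/
def mb : ℕ → ℕ
  | 0 => 0
  | n+1 => 4 * mb ((n+1)/2) + (n+1) % 2
  decreasing_by exact Nat.div_lt_self (Nat.succ_pos _) one_lt_two

lemma mb_eq (n : ℕ) : mb n = 4 * mb (n / 2) + n % 2 := by
  cases n with
  | zero => simp [mb]
  | succ n => rw [mb]

lemma mb_strictMono : StrictMono mb := by
  intro r r' h
  induction r' using Nat.strong_induction_on generalizing r with
  | _ r' ih =>
    have hq : r / 2 ≤ r' / 2 := Nat.div_le_div_right h.le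
    rcases lt_or_eq_of_le hq with hq | hq
    · have hr' : 0 < r' := by omega
      have ihh : mb (r/2) < mb (r'/2) := ih (r'/2) (Nat.div_lt_self hr' one_lt_two) hq
      have h1 : mb r = 4 * mb (r/2) + r % 2 := mb_eq r
      have h2 : mb r' = 4 * mb (r'/2) + r' % 2 := mb_eq r'
      have : r % 2 ≤ 1 := by omega
      omega
    · have h1 : mb r = 4 * mb (r/2) + r % 2 := mb_eq r
      have h2 : mb r' = 4 * mb (r'/2) + r' % 2 := mb_eq r'
      rw [← hq] at h2
      have e1 := Nat.div_add_mod r 2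
      have e2 := Nat.div_add_mod r' 2
      have : r % 2 = 0 ∧ r' % 2 = 1 := by omega
      omega

lemma mb_max (l : ℕ) : mb (2 ^ l - 1) = c4 l := by
  induction l with
  | zero => simp [mb, c4]
  | succ l ih =>
    have h2 : (1:ℕ) ≤ 2 ^ l := Nat.one_le_two_pow
    have he : 2 ^ (l+1) - 1 = 2 * (2^l - 1) + 1 := by rw [pow_succ]; omega
    rw [he, mb_eq]
    have hd : (2 * (2^l - 1) + 1) / 2 = 2^l - 1 := by omega
    have hm : (2 * (2^l - 1) + 1) % 2 = 1 := by omega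
    rw [hd, hm, ih, c4]

lemma mb_le_c4 {l r : ℕ} (h : r < 2 ^ l) : mb r ≤ c4 l := by
  have : r ≤ 2^l - 1 := by omega
  calc mb r ≤ mb (2^l - 1) := mb_strictMono.monotone this
    _ = c4 l := mb_max l

lemma mb_quad (r : ℕ) : r * r + 2 * r ≤ 3 * mb r := by
  induction r using Nat.strong_induction_on with
  | _ r ih =>
    rcases Nat.eq_zero_or_pos r with h | h
    · simp [h, mb]
    · have ihh := ih (r/2) (Nat.div_lt_self h one_lt_two)
      have h1 : mb r = 4 * mb (r/2) + r % 2 := mb_eq r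
      have e1 := Nat.div_add_mod r 2
      have hb : r % 2 ≤ 1 := by omega
      nlinarith [ihh, h1, e1, hb]

lemma sum_to_mb (l : ℕ) (v : ℕ → ℕ) (h : ∀ i, i < l → v i = 1 ∨ v i = 2) :
    ∃ r, r < 2 ^ l ∧ ∑ i ∈ Finset.range l, v i * 4 ^ i = c4 l + mb r := by
  induction l generalizing v with
  | zero => exact ⟨0, by norm_num, by simp [c4, mb]⟩
  | succ l ih =>
    obtain ⟨r', hr', hs'⟩ := ih (fun i => v (i+1)) (fun i hi => h (i+1) (by omega))
    have hv0 : v 0 = 1 ∨ v 0 = 2 := h 0 (by omega)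
    refine ⟨2 * r' + (v 0 - 1), by rw [pow_succ]; omega, ?_⟩
    rw [Finset.sum_range_succ']
    simp only [pow_succ, pow_zero]
    have hre : ∀ i ∈ Finset.range l, v (i+1) * (4^i * 4) = 4 * (v (i+1) * 4^i) :=
      fun i _ => by ring
    rw [Finset.sum_congr rfl hre, ← Finset.mul_sum, hs']
    have hmb : mb (2 * r' + (v 0 - 1)) = 4 * mb r' + (v 0 - 1) := by
      rw [mb_eq]
      have hd : (2 * r' + (v 0 - 1)) / 2 = r' := by omega
      have hm : (2 * r' + (v 0 - 1)) % 2 = v 0 - 1 := by omega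
      rw [hd, hm]
    rw [hmb]
    show 4 * (c4 l + mb r') + v 0 * 1 = c4 (l+1) + (4 * mb r' + (v 0 - 1))
    rw [c4]; omega

lemma mb_to_sum (l : ℕ) : ∀ r, r < 2 ^ l →
    ∃ v : ℕ → ℕ, (∀ i, i < l → v i = 1 ∨ v i = 2) ∧
      c4 l + mb r = ∑ i ∈ Finset.range l, v i * 4 ^ i := by
  induction l with
  | zero =>
    intro r hr
    interval_cases r
    exact ⟨fun _ => 1, by omega, by simp [c4, mb]⟩
  | succ l ih =>
    intro r hr
    have hr2 : r / 2 < 2 ^ l := by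
      have : (2:ℕ)^(l+1) = 2 * 2^l := by rw [pow_succ]; ring
      omega
    obtain ⟨v', hv', hs'⟩ := ih (r/2) hr2
    refine ⟨fun i => if i = 0 then r % 2 + 1 else v' (i-1), fun i hi => ?_, ?_⟩
    · rcases Nat.eq_zero_or_pos i with h0 | h0
      · simp [h0]; omega
      · have := hv' (i-1) (by omega)
        simp [Nat.pos_iff_ne_zero.mp h0]; omega
    · rw [Finset.sum_range_succ']
      simp only [Nat.add_sub_cancel, if_neg (Nat.succ_ne_zero _), if_pos rfl,
        pow_succ, pow_zero]
      have hre : ∀ i ∈ Finset.range l, v' i * (4^i * 4) = 4 * (v' i * 4^i) :=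
        fun i _ => by ring
      rw [Finset.sum_congr rfl hre, ← Finset.mul_sum, ← hs', mb_eq r, c4]
      simp only [ite_true, if_true]
      omega

/-- The increasing enumeration of `T l` on `[0, 4·2^l)`. -/
def g (l j : ℕ) : ℕ := (j / 2 ^ l + 1) * 4 ^ l + c4 l + mb (j % 2 ^ l)

lemma mem_T_iff {l n : ℕ} : n ∈ T l ↔ ∃ j, j < 4 * 2 ^ l ∧ g l j = n := by
  constructor
  · rintro ⟨u, ⟨hu1, hu4⟩, v, hv, rfl⟩
    obtain ⟨r, hr, hs⟩ := sum_to_mb l v hv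
    refine ⟨r + (u - 1) * 2 ^ l, ?_, ?_⟩
    · have : (u-1) ≤ 3 := by omega
      nlinarith [Nat.one_le_two_pow (n := l)]
    · unfold g
      rw [Nat.add_mul_div_right _ _ (Nat.pow_pos (n := l) (by norm_num)),
        Nat.add_mul_mod_self_right, Nat.div_eq_of_lt hr, Nat.mod_eq_of_lt hr, hs]
      have : 0 + (u - 1) + 1 = u := by omega
      rw [this]
      ring
  · rintro ⟨j, hj, rfl⟩
    have h2 : (0:ℕ) < 2 ^ l := Nat.pow_pos (n := l) (by norm_num)
    have hd : j / 2 ^ l < 4 := (Nat.div_lt_iff_lt_mul h2).mpr (by omega)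
    obtain ⟨v, hv, hs⟩ := mb_to_sum l (j % 2 ^ l) (Nat.mod_lt _ h2)
    refine ⟨j / 2^l + 1, ⟨Nat.le_add_left 1 _, hd⟩, v, hv, ?_⟩
    unfold g
    rw [add_assoc, hs]

lemma two_pow_pos (l : ℕ) : (0:ℕ) < 2 ^ l := Nat.pow_pos (n := l) (by norm_num)

lemma g_lb (l j : ℕ) : 4 ^ l + c4 l ≤ g l j := by
  have h1 : 4^l ≤ (j / 2^l + 1) * 4^l := Nat.le_mul_of_pos_left _ (Nat.succ_pos _)
  calc 4^l + c4 l ≤ (j / 2^l + 1) * 4^l + c4 l := Nat.add_le_add_right h1 _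
    _ ≤ (j / 2^l + 1) * 4^l + c4 l + mb (j % 2^l) := Nat.le_add_right _ _
    _ = g l j := rfl

lemma g_ub {l j : ℕ} (hj : j < 4 * 2 ^ l) : g l j ≤ 4 * 4 ^ l + 2 * c4 l := by
  unfold g
  have hd : j / 2 ^ l < 4 := (Nat.div_lt_iff_lt_mul (two_pow_pos l)).mpr (by omega)
  have h1 : (j / 2^l + 1) * 4^l ≤ 4 * 4^l := Nat.mul_le_mul_right _ (by omega)
  have h2 : mb (j % 2^l) ≤ c4 l := mb_le_c4 (Nat.mod_lt _ (two_pow_pos l))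
  omega

lemma g_lt_g_of_lt {l l' j j' : ℕ} (h : l < l') (hj : j < 4 * 2 ^ l) :
    g l j < g l' j' := by
  have h1 : g l j ≤ 4 * 4 ^ l + 2 * c4 l := g_ub hj
  have h2 : 4 ^ l' + c4 l' ≤ g l' j' := g_lb l' j'
  have h3 : 4 ^ (l+1) + c4 (l+1) ≤ 4 ^ l' + c4 l' :=
    Nat.add_le_add (Nat.pow_le_pow_right (by norm_num) h) (c4_mono h)
  have h4 : (4:ℕ) ^ (l+1) = 4 * 4 ^ l := by rw [pow_succ]; ring
  have h5 : c4 (l+1) = 4 * c4 l + 1 := rfl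
  omega

lemma g_strictMonoOn {l j j' : ℕ} (hjj : j < j') (hj' : j' < 4 * 2 ^ l) :
    g l j < g l j' := by
  have h2 := two_pow_pos l
  have hd : j / 2 ^ l ≤ j' / 2 ^ l := Nat.div_le_div_right hjj.le
  have e1 := Nat.div_add_mod j (2^l)
  have e2 := Nat.div_add_mod j' (2^l)
  have hm1 : j % 2^l < 2^l := Nat.mod_lt _ h2
  have hm2 : j' % 2^l < 2^l := Nat.mod_lt _ h2
  rcases lt_or_eq_of_le hd with hd | hd
  · unfold g
    have h1 : (j / 2^l + 1) * 4^l + c4 l + mb (j % 2^l)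
        ≤ (j / 2^l + 1) * 4^l + 2 * c4 l := by
      have := mb_le_c4 hm1
      omega
    have h3 : (j / 2^l + 2) * 4^l ≤ (j' / 2^l + 1) * 4^l :=
      Nat.mul_le_mul_right _ (by omega)
    have h4 := c4_eq l
    nlinarith
  · rw [hd] at e1
    have hmm : j % 2^l < j' % 2^l := by omega
    have := mb_strictMono hmm
    unfold g
    rw [hd]
    omega

lemma g_injOn {l j j' : ℕ} (hj : j < 4 * 2^l) (hj' : j' < 4 * 2^l)
    (he : g l j = g l j') : j = j' := by
  rcases lt_trichotomy j j' with h | h | h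
  · exact absurd he (Nat.ne_of_lt (g_strictMonoOn h hj'))
  · exact h
  · exact absurd he.symm (Nat.ne_of_lt (g_strictMonoOn h hj))

lemma g_le_iff {l j j' : ℕ} (hj : j < 4 * 2^l) (hj' : j' < 4 * 2^l) :
    g l j ≤ g l j' ↔ j ≤ j' := by
  constructor
  · intro h
    by_contra hc
    have : g l j' < g l j := g_strictMonoOn (by omega) hj
    omega
  · intro h
    rcases lt_or_eq_of_le h with h | h
    · exact (g_strictMonoOn h hj').le
    · rw [h]

/-- Elements of `T l` that are `≤ n`, as a `Finset`. -/
def blk (l n : ℕ) : Finset ℕ :=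
  ((Finset.range (4 * 2 ^ l)).filter (fun j => g l j ≤ n)).image (g l)

lemma blk_coe (l n : ℕ) : (blk l n : Set ℕ) = T l ∩ Set.Iic n := by
  ext x
  simp only [blk, Finset.coe_image, Finset.coe_filter, Finset.mem_range,
    Set.mem_image, Set.mem_setOf_eq, Set.mem_inter_iff, Set.mem_Iic, mem_T_iff]
  constructor
  · rintro ⟨j, ⟨hj, hle⟩, rfl⟩
    exact ⟨⟨j, hj, rfl⟩, hle⟩
  · rintro ⟨⟨j, hj, rfl⟩, hle⟩
    exact ⟨j, ⟨hj, hle⟩, rfl⟩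

lemma blk_card (l n : ℕ) :
    (blk l n).card = ((Finset.range (4 * 2 ^ l)).filter (fun j => g l j ≤ n)).card := by
  apply Finset.card_image_of_injOn
  intro j hj j' hj' he
  simp only [Finset.mem_coe, Finset.mem_filter, Finset.mem_range] at hj hj'
  exact g_injOn hj.1 hj'.1 he

/-- The finset of elements of `A` that are `≤ n`. -/
def Af (n : ℕ) : Finset ℕ := (Finset.range (n+1)).biUnion (fun l => blk l n)

lemma lt_of_mem_T {l x : ℕ} (hx : x ∈ T l) : l < x ∧ 4 ^ l ≤ x := by
  rw [mem_T_iff] at hx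
  obtain ⟨j, hj, rfl⟩ := hx
  have h1 := g_lb l j
  have h2 : l < 2 ^ l := Nat.lt_two_pow_self
  have h3 : (2:ℕ) ^ l ≤ 4 ^ l := Nat.pow_le_pow_left (by norm_num) l
  omega

lemma Af_coe (n : ℕ) : (Af n : Set ℕ) = A ∩ Set.Iic n := by
  ext x
  simp only [Af, Finset.coe_biUnion, Finset.mem_coe, Finset.mem_range,
    Set.mem_iUnion, Set.mem_inter_iff, Set.mem_Iic, A]
  constructor
  · rintro ⟨l, hl, hx⟩
    have := blk_coe l n
    have hx' : x ∈ T l ∩ Set.Iic n := by rw [← this]; exact hx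
    exact ⟨⟨l, hx'.1⟩, hx'.2⟩
  · rintro ⟨⟨l, hl⟩, hle⟩
    refine ⟨l, ?_, ?_⟩
    · have := (lt_of_mem_T hl).1
      omega
    · have : x ∈ T l ∩ Set.Iic n := ⟨hl, hle⟩
      rw [← blk_coe l n] at this
      exact this

lemma blk_disjoint {l l' n : ℕ} (h : l ≠ l') : Disjoint (blk l n) (blk l' n) := by
  rw [Finset.disjoint_left]
  intro x hx hx'
  simp only [blk, Finset.mem_image, Finset.mem_filter, Finset.mem_range] at hx hx'
  obtain ⟨j, ⟨hj, _⟩, hxe⟩ := hx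
  obtain ⟨j', ⟨hj', _⟩, hxe'⟩ := hx'
  rcases Nat.lt_or_ge l l' with hll | hll
  · have := g_lt_g_of_lt (j' := j') hll hj
    omega
  · have hll' : l' < l := by omega
    have := g_lt_g_of_lt (j' := j) hll' hj'
    omega

lemma cnt_eq_sum (n : ℕ) :
    cnt A n = ∑ l ∈ Finset.range (n+1), (blk l n).card := by
  have h1 : cnt A n = (Af n).card := by
    unfold cnt
    rw [← Af_coe, Set.ncard_coe_finset]
  rw [h1, Af, Finset.card_biUnion]
  intro l _ l' _ h
  exact blk_disjoint h

lemma two_pow_sum (l : ℕ) : ∑ i ∈ Finset.range l, 2 ^ i + 1 = 2 ^ l := by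
  induction l with
  | zero => simp
  | succ l ih => rw [Finset.sum_range_succ, pow_succ]; omega

lemma blk_card_lt (l' l j n : ℕ) (hl : l' < l) (hj : j < 4 * 2 ^ l) (hn : n = g l j) :
    (blk l' n).card = 4 * 2 ^ l' := by
  rw [blk_card]
  have : (Finset.range (4 * 2 ^ l')).filter (fun j' => g l' j' ≤ n)
      = Finset.range (4 * 2 ^ l') := by
    apply Finset.filter_true_of_mem
    intro j' hj'
    rw [Finset.mem_range] at hj'
    have := g_lt_g_of_lt (j' := j) hl hj'
    omega
  rw [this, Finset.card_range]

lemma blk_card_eq (l j n : ℕ) (hj : j < 4 * 2 ^ l) (hn : n = g l j) :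
    (blk l n).card = j + 1 := by
  rw [blk_card]
  have : (Finset.range (4 * 2 ^ l)).filter (fun j' => g l j' ≤ n)
      = Finset.range (j + 1) := by
    ext j'
    simp only [Finset.mem_filter, Finset.mem_range]
    constructor
    · rintro ⟨h1, h2⟩
      have := (g_le_iff h1 hj).mp (by omega)
      omega
    · intro h
      refine ⟨by omega, ?_⟩
      have := (g_le_iff (by omega : j' < 4 * 2^l) hj).mpr (by omega)
      omega
  rw [this, Finset.card_range]

lemma blk_card_gt (l' l j n : ℕ) (hl : l < l') (hj : j < 4 * 2 ^ l) (hn : n = g l j) :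
    (blk l' n).card = 0 := by
  rw [blk_card, Finset.card_eq_zero]
  rw [Finset.filter_eq_empty_iff]
  intro j' hj'
  have := g_lt_g_of_lt (j' := j') hl hj
  omega

lemma cnt_at (l j : ℕ) (hj : j < 4 * 2 ^ l) : cnt A (g l j) + 3 = 4 * 2 ^ l + j := by
  set n := g l j with hn
  have hln : l < n := by
    have h1 := g_lb l j
    have h2 : l < 2 ^ l := Nat.lt_two_pow_self
    have h3 : (2:ℕ) ^ l ≤ 4 ^ l := Nat.pow_le_pow_left (by norm_num) l
    omega
  rw [cnt_eq_sum]
  have hsplit : Finset.range (n+1) = Finset.range (l+1) ∪ Finset.Ico (l+1) (n+1) := by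
    rw [Finset.range_eq_Ico, ← Finset.Ico_union_Ico_eq_Ico (by omega : 0 ≤ l+1) (by omega), Finset.range_eq_Ico]
  rw [hsplit, Finset.sum_union (by
    rw [Finset.range_eq_Ico]
    exact Finset.Ico_disjoint_Ico_consecutive 0 (l+1) (n+1))]
  have hz : ∑ l' ∈ Finset.Ico (l+1) (n+1), (blk l' n).card = 0 := by
    apply Finset.sum_eq_zero
    intro l' hl'
    rw [Finset.mem_Ico] at hl'
    exact blk_card_gt l' l j n (by omega) hj hn
  rw [hz, Finset.sum_range_succ, blk_card_eq l j n hj hn]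
  have hs : ∑ l' ∈ Finset.range l, (blk l' n).card
      = ∑ l' ∈ Finset.range l, 4 * 2 ^ l' := by
    apply Finset.sum_congr rfl
    intro l' hl'
    rw [Finset.mem_range] at hl'
    exact blk_card_lt l' l j n hl' hj hn
  rw [hs, ← Finset.mul_sum]
  have := two_pow_sum l
  omega

lemma key_int (x r d c M : ℤ) (hx : 1 ≤ x) (hr : 0 ≤ r) (hrx : r < x)
    (h0d : 0 ≤ d) (hd3 : d ≤ 3) (hc : 3 * c + 1 = x ^ 2) (hM : 0 ≤ M)
    (hm : r * r + 2 * r ≤ 3 * M) :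
    ((d + 4) * x + r) ^ 2 + 9 ≤ 15 * ((d + 1) * x ^ 2 + c + M) + 6 * ((d + 4) * x + r) := by
  interval_cases d
  · nlinarith [sq_nonneg (x - r), hm, hc, hrx, hx]
  · nlinarith [hm, hc, hrx, hx, mul_le_mul_of_nonneg_left (show r ≤ x - 1 by omega) (show (0:ℤ) ≤ 10 * x by linarith)]
  · nlinarith [hm, hc, hrx, hx, mul_le_mul_of_nonneg_left (show r ≤ x - 1 by omega) (show (0:ℤ) ≤ 12 * x by linarith)]
  · nlinarith [hm, hc, hrx, hx, mul_le_mul_of_nonneg_left (show r ≤ x - 1 by omega) (show (0:ℤ) ≤ 14 * x by linarith)]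

lemma key_ineq (l j : ℕ) (hj : j < 4 * 2 ^ l) :
    (4 * 2 ^ l + j) ^ 2 + 9 ≤ 15 * g l j + 6 * (4 * 2 ^ l + j) := by
  have h2 := two_pow_pos l
  have hdr := Nat.div_add_mod j (2^l)
  have hrx : j % 2^l < 2^l := Nat.mod_lt _ h2
  have hd3 : j / 2 ^ l < 4 := (Nat.div_lt_iff_lt_mul h2).mpr (by omega)
  have hxx : (4:ℕ) ^ l = (2^l) ^ 2 := by
    rw [← pow_mul, show (4:ℕ) = 2^2 from rfl, ← pow_mul]
    ring_nf
  have hc : 3 * c4 l + 1 = (2^l) ^ 2 := by rw [← hxx]; exact c4_eq l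
  have hm : (j % 2^l) * (j % 2^l) + 2 * (j % 2^l) ≤ 3 * mb (j % 2^l) := mb_quad _
  have hg : g l j = (j / 2^l + 1) * (2^l) ^ 2 + c4 l + mb (j % 2^l) := by
    unfold g; rw [hxx]
  have hkey := key_int (2^l : ℤ) (j % 2^l : ℕ) (j / 2^l : ℕ) (c4 l : ℕ) (mb (j % 2^l) : ℕ)
    (by exact_mod_cast h2) (by positivity) (by exact_mod_cast hrx)
    (by positivity) (by exact_mod_cast Nat.lt_succ_iff.mp hd3) (by exact_mod_cast hc)
    (by positivity) (by exact_mod_cast hm)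
  zify
  rw [hg]
  push_cast
  push_cast at hkey hdr
  nlinarith [hkey, hdr]

lemma cnt_upper (n : ℕ) : (cnt A n) ^ 2 ≤ 15 * n := by
  rcases Finset.eq_empty_or_nonempty (Af n) with he | hne
  · have : cnt A n = 0 := by
      unfold cnt
      rw [← Af_coe, he]
      simp
    simp [this]
  · set n' := (Af n).max' hne with hn'
    have hmem : n' ∈ Af n := (Af n).max'_mem hne
    have hmax : ∀ x ∈ Af n, x ≤ n' := fun x hx => (Af n).le_max' x hx
    have hn'A : n' ∈ A ∩ Set.Iic n := by
      rw [← Af_coe]; exact hmem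
    obtain ⟨hA, hle⟩ := hn'A
    obtain ⟨l, hT⟩ := Set.mem_iUnion.mp hA
    obtain ⟨j, hj, hgn⟩ := mem_T_iff.mp hT
    have hcc : cnt A n = cnt A n' := by
      unfold cnt
      congr 1
      ext x
      simp only [Set.mem_inter_iff, Set.mem_Iic]
      constructor
      · rintro ⟨hxA, hxle⟩
        refine ⟨hxA, ?_⟩
        apply hmax
        rw [← Finset.mem_coe, Af_coe]
        exact ⟨hxA, hxle⟩
      · rintro ⟨hxA, hxle⟩
        exact ⟨hxA, le_trans hxle hle⟩
    have hkey := key_ineq l j hj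
    have hcnt := cnt_at l j hj
    rw [hgn] at hcnt hkey
    rw [hcc]
    have hc2 : cnt A n' + 3 = 4 * 2^l + j := hcnt
    have hle' : n' ≤ n := hle
    have hx2 : (cnt A n' + 3)^2 = (4*2^l+j)^2 := by rw [hc2]
    nlinarith [hkey, hx2, hle']

/-- The extremal points: `nl l = 4^l + 2·c4 l`, the largest element of the
`u = 1` block of `T l`. -/
def nl (l : ℕ) : ℕ := 4 ^ l + 2 * c4 l

lemma nl_eq_g (l : ℕ) : nl l = g l (2 ^ l - 1) := by
  have h1 : (1:ℕ) ≤ 2 ^ l := Nat.one_le_two_pow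
  unfold g nl
  have hd : (2 ^ l - 1) / 2 ^ l = 0 := Nat.div_eq_of_lt (by omega)
  have hm : (2 ^ l - 1) % 2 ^ l = 2 ^ l - 1 := Nat.mod_eq_of_lt (by omega)
  rw [hd, hm, mb_max]
  ring

lemma cnt_nl (l : ℕ) : cnt A (nl l) + 4 = 5 * 2 ^ l := by
  have h1 : (1:ℕ) ≤ 2 ^ l := Nat.one_le_two_pow
  have hj : 2 ^ l - 1 < 4 * 2 ^ l := by omega
  have := cnt_at l (2 ^ l - 1) hj
  rw [← nl_eq_g] at this
  omega

lemma nl_3mul (l : ℕ) : 3 * nl l + 2 = 5 * 4 ^ l := by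
  have := c4_eq l
  unfold nl
  omega

/-- Existence of the scale `l` used in the covering argument. -/
lemma exists_scale (n : ℕ) (h : 3 ≤ n) : ∃ l, 3 * 4 ^ l ≤ n ∧ n < 12 * 4 ^ l := by
  induction n using Nat.strong_induction_on with
  | _ n ih =>
    rcases Nat.lt_or_ge n 12 with h12 | h12
    · exact ⟨0, by omega, by omega⟩
    · have h4 : 3 ≤ n / 4 := by omega
      obtain ⟨l, hl1, hl2⟩ := ih (n / 4) (by omega) h4
      refine ⟨l + 1, ?_, ?_⟩
      · have h5 : 4 * (n / 4) ≤ n := Nat.mul_div_le n 4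
        rw [pow_succ]
        omega
      · rw [pow_succ]
        omega

lemma base4_digits (l : ℕ) : ∀ t, t < 4 ^ l →
    ∑ i ∈ Finset.range l, (t / 4 ^ i % 4) * 4 ^ i = t := by
  induction l with
  | zero => intro t ht; interval_cases t <;> simp
  | succ l ih =>
    intro t ht
    rw [Finset.sum_range_succ']
    have h1 : ∀ i, t / 4 ^ (i+1) % 4 * 4 ^ (i+1) = 4 * ((t/4) / 4 ^ i % 4 * 4 ^ i) := by
      intro i
      rw [pow_succ, mul_comm ((4:ℕ)^i) 4, ← Nat.div_div_eq_div_mul]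
      ring
    simp only [h1, pow_zero, mul_one]
    rw [← Finset.mul_sum, ih (t/4) (by rw [pow_succ] at ht; omega)]
    simp only [pow_zero, Nat.pow_zero, Nat.div_one]
    omega

lemma digit_lt (t i : ℕ) : t / 4 ^ i % 4 < 4 := Nat.mod_lt _ (by norm_num)

/-- Covering at the same level: `n = d·4^l + t` with `3 ≤ d ≤ 7`. -/
lemma cover_same (l d t : ℕ) (hd3 : 3 ≤ d) (hd7 : d ≤ 7) (ht : t < 4 ^ l) :
    ∃ a ∈ T l, ∃ b ∈ T l, a < b ∧ a + (d * 4 ^ l + t) = 2 * b := by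
  set u : ℕ := if d % 2 = 1 then 1 else 2 with hu
  set u' : ℕ := (d + u) / 2 with hu'
  have hu12 : u = 1 ∨ u = 2 := by rcases Nat.mod_two_eq_zero_or_one d with h | h <;> simp [hu, h]
  have huu' : u + d = 2 * u' ∧ u < u' ∧ u' ≤ 4 := by
    rcases Nat.mod_two_eq_zero_or_one d with h | h <;> simp [hu, hu', h] <;> omega
  set v : ℕ → ℕ := fun i => 2 - (t / 4 ^ i % 4) % 2 with hv
  set v' : ℕ → ℕ := fun i => (t / 4 ^ i % 4) / 2 + 1 with hv'
  have hvm : ∀ i, i < l → v i = 1 ∨ v i = 2 := by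
    intro i _
    have := digit_lt t i
    simp only [hv]
    omega
  have hv'm : ∀ i, i < l → v' i = 1 ∨ v' i = 2 := by
    intro i _
    have := digit_lt t i
    simp only [hv']
    omega
  refine ⟨u * 4^l + ∑ i ∈ Finset.range l, v i * 4^i, ⟨u, ⟨by omega, by omega⟩, v, hvm, rfl⟩,
    u' * 4^l + ∑ i ∈ Finset.range l, v' i * 4^i, ⟨u', ⟨by omega, huu'.2.2⟩, v', hv'm, rfl⟩,
    ?_, ?_⟩
  · -- a < b
    have hs : ∑ i ∈ Finset.range l, v i * 4 ^ i ≤ 2 * c4 l := by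
      rw [← c4_sum, Finset.mul_sum]
      apply Finset.sum_le_sum
      intro i hi
      rw [Finset.mem_range] at hi
      rcases hvm i hi with h | h <;> rw [h] <;> omega
    have hcl := c4_eq l
    have h1 : u * 4^l + ∑ i ∈ Finset.range l, v i * 4^i < (u+1) * 4^l := by
      have : (u+1) * 4^l = u * 4^l + 4^l := by ring
      omega
    have h2 : (u+1) * 4^l ≤ u' * 4^l := Nat.mul_le_mul_right _ (by omega)
    omega
  · -- a + n = 2 b
    have hdig : ∀ i ∈ Finset.range l, v i * 4^i + (t / 4^i % 4) * 4^i = 2 * (v' i * 4^i) := by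
      intro i _
      have hc4 := digit_lt t i
      have : v i + (t / 4^i % 4) = 2 * v' i := by
        simp only [hv, hv']
        omega
      calc v i * 4^i + (t / 4^i % 4) * 4^i = (v i + t / 4^i % 4) * 4^i := by ring
        _ = 2 * v' i * 4^i := by rw [this]
        _ = 2 * (v' i * 4^i) := by ring
    have hsum : ∑ i ∈ Finset.range l, v i * 4^i + t
        = 2 * ∑ i ∈ Finset.range l, v' i * 4^i := by
      conv_lhs => rw [← base4_digits l t ht]
      rw [Finset.mul_sum, ← Finset.sum_add_distrib]
      exact Finset.sum_congr rfl hdig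
    have : u * 4^l + d * 4^l = 2 * (u' * 4^l) := by
      have : (u + d) * 4^l = (2 * u') * 4^l := by rw [huu'.1]
      calc u * 4^l + d * 4^l = (u + d) * 4^l := by ring
        _ = (2 * u') * 4^l := by rw [huu'.1]
        _ = 2 * (u' * 4^l) := by ring
    omega

/-- Covering at mixed levels: `n = d·4^l + t` with `8 ≤ d ≤ 11`. -/
lemma cover_mixed (l d t : ℕ) (hd8 : 8 ≤ d) (hd11 : d ≤ 11) (ht : t < 4 ^ l) :
    ∃ a ∈ T l, ∃ b ∈ T (l+1), a < b ∧ a + (d * 4 ^ l + t) = 2 * b := by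
  set u : ℕ := 2 - d % 2 with hu
  set v : ℕ → ℕ := fun i => 2 - (t / 4 ^ i % 4) % 2 with hv
  set v' : ℕ → ℕ := fun i => if i = l then d / 2 - 3 else (t / 4 ^ i % 4) / 2 + 1 with hv'
  have hvm : ∀ i, i < l → v i = 1 ∨ v i = 2 := by
    intro i _
    have := digit_lt t i
    simp only [hv]
    omega
  have hv'm : ∀ i, i < l + 1 → v' i = 1 ∨ v' i = 2 := by
    intro i hi
    simp only [hv']
    rcases eq_or_ne i l with h | h
    · simp [h]; omega
    · have := digit_lt t i
      simp [h]; omega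
  refine ⟨u * 4^l + ∑ i ∈ Finset.range l, v i * 4^i, ⟨u, ⟨by omega, by omega⟩, v, hvm, rfl⟩,
    1 * 4^(l+1) + ∑ i ∈ Finset.range (l+1), v' i * 4^i,
      ⟨1, ⟨le_refl 1, by omega⟩, v', hv'm, rfl⟩, ?_, ?_⟩
  · -- a < b
    have hs : ∑ i ∈ Finset.range l, v i * 4 ^ i ≤ 2 * c4 l := by
      rw [← c4_sum, Finset.mul_sum]
      apply Finset.sum_le_sum
      intro i hi
      rw [Finset.mem_range] at hi
      rcases hvm i hi with h | h <;> rw [h] <;> omega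
    have hcl := c4_eq l
    have hp : (4:ℕ)^(l+1) = 4 * 4^l := by rw [pow_succ]; ring
    have h1 : u * 4^l ≤ 2 * 4^l := Nat.mul_le_mul_right _ (by omega)
    omega
  · -- a + n = 2 b
    have hdig : ∀ i ∈ Finset.range l, v i * 4^i + (t / 4^i % 4) * 4^i = 2 * (v' i * 4^i) := by
      intro i hi
      rw [Finset.mem_range] at hi
      have hc4 := digit_lt t i
      have hne : i ≠ l := by omega
      have : v i + (t / 4^i % 4) = 2 * v' i := by
        simp only [hv, hv', if_neg hne]
        omega
      calc v i * 4^i + (t / 4^i % 4) * 4^i = (v i + t / 4^i % 4) * 4^i := by ring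
        _ = 2 * v' i * 4^i := by rw [this]
        _ = 2 * (v' i * 4^i) := by ring
    have hsum : ∑ i ∈ Finset.range l, v i * 4^i + t
        = 2 * ∑ i ∈ Finset.range l, v' i * 4^i := by
      conv_lhs => rw [← base4_digits l t ht]
      rw [Finset.mul_sum, ← Finset.sum_add_distrib]
      exact Finset.sum_congr rfl hdig
    have hsplit : ∑ i ∈ Finset.range (l+1), v' i * 4^i
        = (d/2 - 3) * 4^l + ∑ i ∈ Finset.range l, v' i * 4^i := by
      rw [Finset.sum_range_succ]
      have : v' l = d/2 - 3 := by simp [hv']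
      rw [this]
      ring
    have htop : u * 4^l + d * 4^l = 2 * (1 * 4^(l+1)) + 2 * ((d/2 - 3) * 4^l) := by
      have hp : (4:ℕ)^(l+1) = 4 * 4^l := by rw [pow_succ]; ring
      have hud : u + d = 8 + 2 * (d/2 - 3) := by simp only [hu]; omega
      calc u * 4^l + d * 4^l = (u + d) * 4^l := by ring
        _ = (8 + 2 * (d/2 - 3)) * 4^l := by rw [hud]
        _ = 2 * (4 * 4^l) + 2 * ((d/2 - 3) * 4^l) := by ring
        _ = 2 * (1 * 4^(l+1)) + 2 * ((d/2 - 3) * 4^l) := by rw [hp]; ring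
    omega

lemma A_covering : AP3Covering A := by
  refine ⟨2, fun n hn => ?_⟩
  obtain ⟨l, hl1, hl2⟩ := exists_scale n (by omega)
  have h4 : (0:ℕ) < 4 ^ l := Nat.pow_pos (n := l) (by norm_num)
  set d := n / 4 ^ l with hd
  set t := n % 4 ^ l with htd
  have hnd : n = d * 4^l + t := by
    rw [hd, htd, mul_comm]
    exact (Nat.div_add_mod n (4^l)).symm
  have ht : t < 4 ^ l := Nat.mod_lt _ h4
  have hd3 : 3 ≤ d := Nat.le_div_iff_mul_le h4 |>.mpr (by omega)
  have hd11 : d ≤ 11 := by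
    rw [hd]
    by_contra hc
    push_neg at hc
    have : 12 ≤ n / 4^l := hc
    have := Nat.le_div_iff_mul_le h4 |>.mp this
    omega
  rcases Nat.lt_or_ge d 8 with hcase | hcase
  · obtain ⟨a, ha, b, hb, hab, he⟩ := cover_same l d t hd3 (by omega) ht
    refine ⟨a, Set.mem_iUnion.mpr ⟨l, ha⟩, b, Set.mem_iUnion.mpr ⟨l, hb⟩, hab, by omega, by omega⟩
  · obtain ⟨a, ha, b, hb, hab, he⟩ := cover_mixed l d t hcase hd11 ht
    refine ⟨a, Set.mem_iUnion.mpr ⟨l, ha⟩, b, Set.mem_iUnion.mpr ⟨l+1, hb⟩, hab, by omega, by omega⟩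

lemma ratio_le (n : ℕ) : (cnt A n : ℝ) / Real.sqrt n ≤ Real.sqrt 15 := by
  have hub := cnt_upper n
  rcases Nat.eq_zero_or_pos n with h0 | hp
  · subst h0
    have hc : cnt A 0 = 0 := by nlinarith [hub]
    rw [hc]
    simp only [Nat.cast_zero, zero_div]
    exact Real.sqrt_nonneg 15
  · have hsn : (0:ℝ) < Real.sqrt n := Real.sqrt_pos.mpr (by exact_mod_cast hp)
    rw [div_le_iff₀ hsn, ← Real.sqrt_mul (by norm_num : (15:ℝ) ≥ 0) (n:ℝ)]
    apply Real.le_sqrt_of_sq_le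
    have : ((cnt A n : ℕ):ℝ)^2 ≤ ((15 * n : ℕ):ℝ) := by exact_mod_cast hub
    push_cast at this ⊢
    linarith

lemma nl_pos (l : ℕ) : 0 < nl l := by
  unfold nl
  have : (0:ℕ) < 4^l := Nat.pow_pos (n := l) (by norm_num)
  omega

lemma nl_ge (l : ℕ) : l ≤ nl l := by
  unfold nl
  have h1 : l < 2 ^ l := Nat.lt_two_pow_self
  have h2 : (2:ℕ)^l ≤ 4^l := Nat.pow_le_pow_left (by norm_num) l
  omega

lemma ratio_tendsto :
    Filter.Tendsto (fun l : ℕ => (cnt A (nl l) : ℝ) / Real.sqrt (nl l))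
      Filter.atTop (nhds (Real.sqrt 15)) := by
  have e1 : ∀ l : ℕ, (cnt A (nl l) : ℝ) = 5 * 2^l - 4 := by
    intro l
    have h := cnt_nl l
    have : ((cnt A (nl l) + 4 : ℕ) : ℝ) = ((5 * 2^l : ℕ) : ℝ) := congrArg (Nat.cast : ℕ → ℝ) h
    push_cast at this
    linarith
  have e2 : ∀ l : ℕ, ((nl l : ℕ) : ℝ) = (5 * 4^l - 2) / 3 := by
    intro l
    have h := nl_3mul l
    have : ((3 * nl l + 2 : ℕ) : ℝ) = ((5 * 4^l : ℕ) : ℝ) := congrArg (Nat.cast : ℕ → ℝ) h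
    push_cast at this
    linarith
  -- rewrite the ratio as sqrt of a rational expression
  have key : ∀ l : ℕ, (cnt A (nl l) : ℝ) / Real.sqrt (nl l)
      = Real.sqrt ((75 - 120 * ((2:ℝ)^l)⁻¹ + 48 * (((2:ℝ)^l)⁻¹)^2)
          / (5 - 2 * (((2:ℝ)^l)⁻¹)^2)) := by
    intro l
    have h2p : (0:ℝ) < 2^l := by positivity
    have h2ne : ((2:ℝ)^l) ≠ 0 := ne_of_gt h2p
    have h4 : ((4:ℝ)^l) = ((2:ℝ)^l)^2 := by
      rw [← pow_mul, show (4:ℝ) = 2^2 by norm_num, ← pow_mul]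
      ring_nf
    have hcnt_nonneg : (0:ℝ) ≤ (cnt A (nl l) : ℝ) := Nat.cast_nonneg _
    have hnl_nonneg : (0:ℝ) ≤ ((nl l : ℕ) : ℝ) := Nat.cast_nonneg _
    have step1 : (cnt A (nl l) : ℝ) / Real.sqrt (nl l)
        = Real.sqrt ((cnt A (nl l) : ℝ)^2 / ((nl l : ℕ) : ℝ)) := by
      rw [Real.sqrt_div (by positivity) _, Real.sqrt_sq hcnt_nonneg]
    rw [step1]
    congr 1
    rw [e1, e2, h4]
    have h2l1 : (1:ℝ) ≤ 2^l := by
      simpa using pow_le_pow_left₀ (by norm_num : (0:ℝ) ≤ 1) (by norm_num : (1:ℝ) ≤ 2) l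
    have hy0 : (0:ℝ) < ((2:ℝ)^l)⁻¹ := by positivity
    have hy1 : ((2:ℝ)^l)⁻¹ ≤ 1 := by
      rw [inv_le_one_iff₀]
      right; exact h2l1
    have hden : (5:ℝ) * ((2:ℝ)^l)^2 - 2 > 0 := by nlinarith
    have hden' : ((5:ℝ) * ((2:ℝ)^l)^2 - 2) / 3 ≠ 0 := by positivity
    have hden2 : (5:ℝ) - 2 * (((2:ℝ)^l)⁻¹)^2 > 0 := by nlinarith
    rw [div_eq_div_iff (by positivity) (by positivity)]
    field_simp
    ring
  rw [show (fun l : ℕ => (cnt A (nl l) : ℝ) / Real.sqrt (nl l)) = fun l : ℕ =>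
    Real.sqrt ((75 - 120 * ((2:ℝ)^l)⁻¹ + 48 * (((2:ℝ)^l)⁻¹)^2)
          / (5 - 2 * (((2:ℝ)^l)⁻¹)^2)) from funext key]
  have hlim : Filter.Tendsto (fun l : ℕ => ((2:ℝ)^l)⁻¹) Filter.atTop (nhds 0) := by
    have : ∀ l : ℕ, ((2:ℝ)^l)⁻¹ = (1/2:ℝ)^l := by
      intro l; rw [← inv_pow]; norm_num
    rw [funext this]
    exact tendsto_pow_atTop_nhds_zero_of_lt_one (by norm_num) (by norm_num)
  have hnum : Filter.Tendsto
      (fun l : ℕ => (75 - 120 * ((2:ℝ)^l)⁻¹ + 48 * (((2:ℝ)^l)⁻¹)^2)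
          / (5 - 2 * (((2:ℝ)^l)⁻¹)^2)) Filter.atTop (nhds 15) := by
    have h1 : Filter.Tendsto
        (fun l : ℕ => 75 - 120 * ((2:ℝ)^l)⁻¹ + 48 * (((2:ℝ)^l)⁻¹)^2)
        Filter.atTop (nhds (75 - 120 * 0 + 48 * 0^2)) :=
      (tendsto_const_nhds.sub (hlim.const_mul 120)).add ((hlim.pow 2).const_mul 48)
    have h2 : Filter.Tendsto
        (fun l : ℕ => 5 - 2 * (((2:ℝ)^l)⁻¹)^2)
        Filter.atTop (nhds (5 - 2 * 0^2)) :=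
      tendsto_const_nhds.sub ((hlim.pow 2).const_mul 2)
    rw [show (75:ℝ) - 120 * 0 + 48 * 0^2 = 75 by norm_num] at h1
    rw [show (5:ℝ) - 2 * 0^2 = 5 by norm_num] at h2
    have hdiv := h1.div h2 (by norm_num)
    rw [show (75:ℝ)/5 = 15 by norm_num] at hdiv
    exact hdiv
  exact (Real.continuous_sqrt.tendsto 15).comp hnum

theorem stmt_0 :
    ∃ S : Set ℕ, AP3Covering S ∧
      Filter.limsup (fun n : ℕ => (cnt S n : ℝ) / Real.sqrt n) Filter.atTop
        = Real.sqrt 15 := by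
  refine ⟨A, A_covering, ?_⟩
  set f : ℕ → ℝ := fun n => (cnt A n : ℝ) / Real.sqrt n with hf
  have hfle : ∀ n, f n ≤ Real.sqrt 15 := ratio_le
  have hf0 : ∀ n, 0 ≤ f n := fun n => by
    apply div_nonneg (Nat.cast_nonneg _) (Real.sqrt_nonneg _)
  apply le_antisymm
  · exact Filter.limsup_le_of_le
      (Filter.isCoboundedUnder_le_of_le Filter.atTop hf0)
      (Filter.Eventually.of_forall hfle)
  · apply le_of_forall_lt_imp_le_of_dense
    intro b hb
    apply Filter.le_limsup_of_frequently_le _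
      (Filter.isBoundedUnder_of ⟨Real.sqrt 15, hfle⟩)
    -- frequently b ≤ f n
    have hev : ∀ᶠ l in Filter.atTop, b < f (nl l) :=
      ratio_tendsto.eventually (eventually_gt_nhds hb)
    rw [Filter.frequently_atTop]
    intro N
    obtain ⟨L, hL⟩ := Filter.eventually_atTop.mp hev
    refine ⟨nl (max N L), ?_, ?_⟩
    · calc N ≤ max N L := le_max_left _ _
        _ ≤ nl (max N L) := nl_ge _
    · exact (hL (max N L) (le_max_right _ _)).le
end

section
/- Let T_l = { u·4^l + Σ_{i=0}^{l-1} v_i·4^i : u ∈ {1,2,3,4}, v_i ∈ {1,2} for 0 ≤ i ≤ l−1 } for each integer l ≥ 0, and let A = ⋃_{l≥0} T_l. Then for every integer n ≥ 32 there exist a, b ∈ A with a < b < n and a + n = 2b; in particular, A is an AP₃-covering sequence. -/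
lemma A_base {u : ℕ} (h1 : 1 ≤ u) (h2 : u ≤ 4) : u ∈ A := by
  refine Set.mem_iUnion.2 ⟨0, u, ⟨h1, h2⟩, fun _ => 1, fun i hi => by omega, by simp⟩

lemma A_step {t : ℕ} (ht : t ∈ A) {v : ℕ} (hv : v = 1 ∨ v = 2) : 4 * t + v ∈ A := by
  obtain ⟨l, u, ⟨hu1, hu2⟩, w, hw, heq⟩ := Set.mem_iUnion.1 ht
  refine Set.mem_iUnion.2 ⟨l + 1, u, ⟨hu1, hu2⟩,
    fun i => if i = 0 then v else w (i - 1), fun i hi => ?_, ?_⟩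
  · rcases Nat.eq_zero_or_pos i with h|h
    · simpa [h] using hv
    · have : i - 1 < l := by omega
      simpa [Nat.pos_iff_ne_zero.1 h] using hw (i - 1) this
  · rw [Finset.sum_range_succ']
    simp only [if_pos rfl]
    have hsum : (∑ i ∈ Finset.range l, (if i + 1 = 0 then v else w (i + 1 - 1)) * 4 ^ (i + 1))
        = 4 * ∑ i ∈ Finset.range l, w i * 4 ^ i := by
      rw [Finset.mul_sum]
      refine Finset.sum_congr rfl fun i _ => ?_
      simp [pow_succ]
      ring
    rw [hsum, heq]
    simp only [if_pos trivial, pow_succ]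
    ring


lemma memA_1 : (1 : ℕ) ∈ A := A_base (by norm_num) (by norm_num)

lemma memA_2 : (2 : ℕ) ∈ A := A_base (by norm_num) (by norm_num)

lemma memA_3 : (3 : ℕ) ∈ A := A_base (by norm_num) (by norm_num)

lemma memA_4 : (4 : ℕ) ∈ A := A_base (by norm_num) (by norm_num)

lemma memA_5 : (5 : ℕ) ∈ A := by
  have h := A_step memA_1 (Or.inl rfl : ((1:ℕ) = 1 ∨ (1:ℕ) = 2))
  norm_num at h
  exact h

lemma memA_6 : (6 : ℕ) ∈ A := by
  have h := A_step memA_1 (Or.inr rfl : ((2:ℕ) = 1 ∨ (2:ℕ) = 2))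
  norm_num at h
  exact h

lemma memA_9 : (9 : ℕ) ∈ A := by
  have h := A_step memA_2 (Or.inl rfl : ((1:ℕ) = 1 ∨ (1:ℕ) = 2))
  norm_num at h
  exact h

lemma memA_10 : (10 : ℕ) ∈ A := by
  have h := A_step memA_2 (Or.inr rfl : ((2:ℕ) = 1 ∨ (2:ℕ) = 2))
  norm_num at h
  exact h

lemma memA_13 : (13 : ℕ) ∈ A := by
  have h := A_step memA_3 (Or.inl rfl : ((1:ℕ) = 1 ∨ (1:ℕ) = 2))
  norm_num at h
  exact h

lemma memA_14 : (14 : ℕ) ∈ A := by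
  have h := A_step memA_3 (Or.inr rfl : ((2:ℕ) = 1 ∨ (2:ℕ) = 2))
  norm_num at h
  exact h

lemma memA_17 : (17 : ℕ) ∈ A := by
  have h := A_step memA_4 (Or.inl rfl : ((1:ℕ) = 1 ∨ (1:ℕ) = 2))
  norm_num at h
  exact h

lemma memA_18 : (18 : ℕ) ∈ A := by
  have h := A_step memA_4 (Or.inr rfl : ((2:ℕ) = 1 ∨ (2:ℕ) = 2))
  norm_num at h
  exact h

lemma memA_21 : (21 : ℕ) ∈ A := by
  have h := A_step memA_5 (Or.inl rfl : ((1:ℕ) = 1 ∨ (1:ℕ) = 2))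
  norm_num at h
  exact h

lemma memA_22 : (22 : ℕ) ∈ A := by
  have h := A_step memA_5 (Or.inr rfl : ((2:ℕ) = 1 ∨ (2:ℕ) = 2))
  norm_num at h
  exact h

lemma memA_25 : (25 : ℕ) ∈ A := by
  have h := A_step memA_6 (Or.inl rfl : ((1:ℕ) = 1 ∨ (1:ℕ) = 2))
  norm_num at h
  exact h

lemma memA_26 : (26 : ℕ) ∈ A := by
  have h := A_step memA_6 (Or.inr rfl : ((2:ℕ) = 1 ∨ (2:ℕ) = 2))
  norm_num at h
  exact h

lemma memA_37 : (37 : ℕ) ∈ A := by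
  have h := A_step memA_9 (Or.inl rfl : ((1:ℕ) = 1 ∨ (1:ℕ) = 2))
  norm_num at h
  exact h

lemma memA_38 : (38 : ℕ) ∈ A := by
  have h := A_step memA_9 (Or.inr rfl : ((2:ℕ) = 1 ∨ (2:ℕ) = 2))
  norm_num at h
  exact h

lemma memA_41 : (41 : ℕ) ∈ A := by
  have h := A_step memA_10 (Or.inl rfl : ((1:ℕ) = 1 ∨ (1:ℕ) = 2))
  norm_num at h
  exact h

lemma memA_42 : (42 : ℕ) ∈ A := by
  have h := A_step memA_10 (Or.inr rfl : ((2:ℕ) = 1 ∨ (2:ℕ) = 2))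
  norm_num at h
  exact h

lemma memA_53 : (53 : ℕ) ∈ A := by
  have h := A_step memA_13 (Or.inl rfl : ((1:ℕ) = 1 ∨ (1:ℕ) = 2))
  norm_num at h
  exact h

lemma memA_54 : (54 : ℕ) ∈ A := by
  have h := A_step memA_13 (Or.inr rfl : ((2:ℕ) = 1 ∨ (2:ℕ) = 2))
  norm_num at h
  exact h

lemma memA_57 : (57 : ℕ) ∈ A := by
  have h := A_step memA_14 (Or.inl rfl : ((1:ℕ) = 1 ∨ (1:ℕ) = 2))
  norm_num at h
  exact h

lemma memA_58 : (58 : ℕ) ∈ A := by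
  have h := A_step memA_14 (Or.inr rfl : ((2:ℕ) = 1 ∨ (2:ℕ) = 2))
  norm_num at h
  exact h

lemma memA_69 : (69 : ℕ) ∈ A := by
  have h := A_step memA_17 (Or.inl rfl : ((1:ℕ) = 1 ∨ (1:ℕ) = 2))
  norm_num at h
  exact h

lemma memA_70 : (70 : ℕ) ∈ A := by
  have h := A_step memA_17 (Or.inr rfl : ((2:ℕ) = 1 ∨ (2:ℕ) = 2))
  norm_num at h
  exact h


lemma key : ∀ n : ℕ, 8 ≤ n → ∃ a ∈ A, ∃ b ∈ A, a < n ∧ a + n = 2 * b := by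
  intro n
  induction n using Nat.strong_induction_on with
  | _ n ih =>
    intro hn
    by_cases h : n < 128
    · interval_cases n
      · exact ⟨2, memA_2, 5, memA_5, by norm_num, by norm_num⟩
      · exact ⟨1, memA_1, 5, memA_5, by norm_num, by norm_num⟩
      · exact ⟨2, memA_2, 6, memA_6, by norm_num, by norm_num⟩
      · exact ⟨1, memA_1, 6, memA_6, by norm_num, by norm_num⟩
      · exact ⟨6, memA_6, 9, memA_9, by norm_num, by norm_num⟩
      · exact ⟨5, memA_5, 9, memA_9, by norm_num, by norm_num⟩
      · exact ⟨4, memA_4, 9, memA_9, by norm_num, by norm_num⟩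
      · exact ⟨3, memA_3, 9, memA_9, by norm_num, by norm_num⟩
      · exact ⟨2, memA_2, 9, memA_9, by norm_num, by norm_num⟩
      · exact ⟨1, memA_1, 9, memA_9, by norm_num, by norm_num⟩
      · exact ⟨2, memA_2, 10, memA_10, by norm_num, by norm_num⟩
      · exact ⟨1, memA_1, 10, memA_10, by norm_num, by norm_num⟩
      · exact ⟨6, memA_6, 13, memA_13, by norm_num, by norm_num⟩
      · exact ⟨5, memA_5, 13, memA_13, by norm_num, by norm_num⟩
      · exact ⟨4, memA_4, 13, memA_13, by norm_num, by norm_num⟩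
      · exact ⟨3, memA_3, 13, memA_13, by norm_num, by norm_num⟩
      · exact ⟨2, memA_2, 13, memA_13, by norm_num, by norm_num⟩
      · exact ⟨1, memA_1, 13, memA_13, by norm_num, by norm_num⟩
      · exact ⟨2, memA_2, 14, memA_14, by norm_num, by norm_num⟩
      · exact ⟨1, memA_1, 14, memA_14, by norm_num, by norm_num⟩
      · exact ⟨6, memA_6, 17, memA_17, by norm_num, by norm_num⟩
      · exact ⟨5, memA_5, 17, memA_17, by norm_num, by norm_num⟩
      · exact ⟨4, memA_4, 17, memA_17, by norm_num, by norm_num⟩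
      · exact ⟨3, memA_3, 17, memA_17, by norm_num, by norm_num⟩
      · exact ⟨2, memA_2, 17, memA_17, by norm_num, by norm_num⟩
      · exact ⟨1, memA_1, 17, memA_17, by norm_num, by norm_num⟩
      · exact ⟨2, memA_2, 18, memA_18, by norm_num, by norm_num⟩
      · exact ⟨1, memA_1, 18, memA_18, by norm_num, by norm_num⟩
      · exact ⟨6, memA_6, 21, memA_21, by norm_num, by norm_num⟩
      · exact ⟨5, memA_5, 21, memA_21, by norm_num, by norm_num⟩
      · exact ⟨4, memA_4, 21, memA_21, by norm_num, by norm_num⟩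
      · exact ⟨3, memA_3, 21, memA_21, by norm_num, by norm_num⟩
      · exact ⟨2, memA_2, 21, memA_21, by norm_num, by norm_num⟩
      · exact ⟨1, memA_1, 21, memA_21, by norm_num, by norm_num⟩
      · exact ⟨2, memA_2, 22, memA_22, by norm_num, by norm_num⟩
      · exact ⟨1, memA_1, 22, memA_22, by norm_num, by norm_num⟩
      · exact ⟨6, memA_6, 25, memA_25, by norm_num, by norm_num⟩
      · exact ⟨5, memA_5, 25, memA_25, by norm_num, by norm_num⟩
      · exact ⟨4, memA_4, 25, memA_25, by norm_num, by norm_num⟩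
      · exact ⟨3, memA_3, 25, memA_25, by norm_num, by norm_num⟩
      · exact ⟨2, memA_2, 25, memA_25, by norm_num, by norm_num⟩
      · exact ⟨1, memA_1, 25, memA_25, by norm_num, by norm_num⟩
      · exact ⟨2, memA_2, 26, memA_26, by norm_num, by norm_num⟩
      · exact ⟨1, memA_1, 26, memA_26, by norm_num, by norm_num⟩
      · exact ⟨22, memA_22, 37, memA_37, by norm_num, by norm_num⟩
      · exact ⟨21, memA_21, 37, memA_37, by norm_num, by norm_num⟩
      · exact ⟨22, memA_22, 38, memA_38, by norm_num, by norm_num⟩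
      · exact ⟨21, memA_21, 38, memA_38, by norm_num, by norm_num⟩
      · exact ⟨18, memA_18, 37, memA_37, by norm_num, by norm_num⟩
      · exact ⟨17, memA_17, 37, memA_37, by norm_num, by norm_num⟩
      · exact ⟨18, memA_18, 38, memA_38, by norm_num, by norm_num⟩
      · exact ⟨17, memA_17, 38, memA_38, by norm_num, by norm_num⟩
      · exact ⟨14, memA_14, 37, memA_37, by norm_num, by norm_num⟩
      · exact ⟨13, memA_13, 37, memA_37, by norm_num, by norm_num⟩
      · exact ⟨14, memA_14, 38, memA_38, by norm_num, by norm_num⟩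
      · exact ⟨13, memA_13, 38, memA_38, by norm_num, by norm_num⟩
      · exact ⟨10, memA_10, 37, memA_37, by norm_num, by norm_num⟩
      · exact ⟨9, memA_9, 37, memA_37, by norm_num, by norm_num⟩
      · exact ⟨10, memA_10, 38, memA_38, by norm_num, by norm_num⟩
      · exact ⟨9, memA_9, 38, memA_38, by norm_num, by norm_num⟩
      · exact ⟨6, memA_6, 37, memA_37, by norm_num, by norm_num⟩
      · exact ⟨5, memA_5, 37, memA_37, by norm_num, by norm_num⟩
      · exact ⟨4, memA_4, 37, memA_37, by norm_num, by norm_num⟩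
      · exact ⟨3, memA_3, 37, memA_37, by norm_num, by norm_num⟩
      · exact ⟨2, memA_2, 37, memA_37, by norm_num, by norm_num⟩
      · exact ⟨1, memA_1, 37, memA_37, by norm_num, by norm_num⟩
      · exact ⟨2, memA_2, 38, memA_38, by norm_num, by norm_num⟩
      · exact ⟨1, memA_1, 38, memA_38, by norm_num, by norm_num⟩
      · exact ⟨6, memA_6, 41, memA_41, by norm_num, by norm_num⟩
      · exact ⟨5, memA_5, 41, memA_41, by norm_num, by norm_num⟩
      · exact ⟨4, memA_4, 41, memA_41, by norm_num, by norm_num⟩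
      · exact ⟨3, memA_3, 41, memA_41, by norm_num, by norm_num⟩
      · exact ⟨2, memA_2, 41, memA_41, by norm_num, by norm_num⟩
      · exact ⟨1, memA_1, 41, memA_41, by norm_num, by norm_num⟩
      · exact ⟨2, memA_2, 42, memA_42, by norm_num, by norm_num⟩
      · exact ⟨1, memA_1, 42, memA_42, by norm_num, by norm_num⟩
      · exact ⟨22, memA_22, 53, memA_53, by norm_num, by norm_num⟩
      · exact ⟨21, memA_21, 53, memA_53, by norm_num, by norm_num⟩
      · exact ⟨22, memA_22, 54, memA_54, by norm_num, by norm_num⟩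
      · exact ⟨21, memA_21, 54, memA_54, by norm_num, by norm_num⟩
      · exact ⟨18, memA_18, 53, memA_53, by norm_num, by norm_num⟩
      · exact ⟨17, memA_17, 53, memA_53, by norm_num, by norm_num⟩
      · exact ⟨18, memA_18, 54, memA_54, by norm_num, by norm_num⟩
      · exact ⟨17, memA_17, 54, memA_54, by norm_num, by norm_num⟩
      · exact ⟨14, memA_14, 53, memA_53, by norm_num, by norm_num⟩
      · exact ⟨13, memA_13, 53, memA_53, by norm_num, by norm_num⟩
      · exact ⟨14, memA_14, 54, memA_54, by norm_num, by norm_num⟩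
      · exact ⟨13, memA_13, 54, memA_54, by norm_num, by norm_num⟩
      · exact ⟨10, memA_10, 53, memA_53, by norm_num, by norm_num⟩
      · exact ⟨9, memA_9, 53, memA_53, by norm_num, by norm_num⟩
      · exact ⟨10, memA_10, 54, memA_54, by norm_num, by norm_num⟩
      · exact ⟨9, memA_9, 54, memA_54, by norm_num, by norm_num⟩
      · exact ⟨6, memA_6, 53, memA_53, by norm_num, by norm_num⟩
      · exact ⟨5, memA_5, 53, memA_53, by norm_num, by norm_num⟩
      · exact ⟨4, memA_4, 53, memA_53, by norm_num, by norm_num⟩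
      · exact ⟨3, memA_3, 53, memA_53, by norm_num, by norm_num⟩
      · exact ⟨2, memA_2, 53, memA_53, by norm_num, by norm_num⟩
      · exact ⟨1, memA_1, 53, memA_53, by norm_num, by norm_num⟩
      · exact ⟨2, memA_2, 54, memA_54, by norm_num, by norm_num⟩
      · exact ⟨1, memA_1, 54, memA_54, by norm_num, by norm_num⟩
      · exact ⟨6, memA_6, 57, memA_57, by norm_num, by norm_num⟩
      · exact ⟨5, memA_5, 57, memA_57, by norm_num, by norm_num⟩
      · exact ⟨4, memA_4, 57, memA_57, by norm_num, by norm_num⟩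
      · exact ⟨3, memA_3, 57, memA_57, by norm_num, by norm_num⟩
      · exact ⟨2, memA_2, 57, memA_57, by norm_num, by norm_num⟩
      · exact ⟨1, memA_1, 57, memA_57, by norm_num, by norm_num⟩
      · exact ⟨2, memA_2, 58, memA_58, by norm_num, by norm_num⟩
      · exact ⟨1, memA_1, 58, memA_58, by norm_num, by norm_num⟩
      · exact ⟨22, memA_22, 69, memA_69, by norm_num, by norm_num⟩
      · exact ⟨21, memA_21, 69, memA_69, by norm_num, by norm_num⟩
      · exact ⟨22, memA_22, 70, memA_70, by norm_num, by norm_num⟩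
      · exact ⟨21, memA_21, 70, memA_70, by norm_num, by norm_num⟩
      · exact ⟨18, memA_18, 69, memA_69, by norm_num, by norm_num⟩
      · exact ⟨17, memA_17, 69, memA_69, by norm_num, by norm_num⟩
      · exact ⟨18, memA_18, 70, memA_70, by norm_num, by norm_num⟩
      · exact ⟨17, memA_17, 70, memA_70, by norm_num, by norm_num⟩
      · exact ⟨14, memA_14, 69, memA_69, by norm_num, by norm_num⟩
      · exact ⟨13, memA_13, 69, memA_69, by norm_num, by norm_num⟩
      · exact ⟨14, memA_14, 70, memA_70, by norm_num, by norm_num⟩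
      · exact ⟨13, memA_13, 70, memA_70, by norm_num, by norm_num⟩
    · push_neg at h
      obtain ⟨a', ha', b', hb', hlt, heq⟩ := ih (n / 4) (by omega) (by omega)
      have h4 : n % 4 = 0 ∨ n % 4 = 1 ∨ n % 4 = 2 ∨ n % 4 = 3 := by omega
      rcases h4 with h0 | h1 | h2 | h3
      · exact ⟨4 * a' + 2, A_step ha' (Or.inr rfl), 4 * b' + 1, A_step hb' (Or.inl rfl),
          by omega, by omega⟩
      · exact ⟨4 * a' + 1, A_step ha' (Or.inl rfl), 4 * b' + 1, A_step hb' (Or.inl rfl),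
          by omega, by omega⟩
      · exact ⟨4 * a' + 2, A_step ha' (Or.inr rfl), 4 * b' + 2, A_step hb' (Or.inr rfl),
          by omega, by omega⟩
      · exact ⟨4 * a' + 1, A_step ha' (Or.inl rfl), 4 * b' + 2, A_step hb' (Or.inr rfl),
          by omega, by omega⟩

theorem stmt_1 :
    (∀ n : ℕ, 32 ≤ n → ∃ a ∈ A, ∃ b ∈ A, a < b ∧ b < n ∧ a + n = 2 * b) ∧
      AP3Covering A := by
  have main : ∀ n : ℕ, 32 ≤ n → ∃ a ∈ A, ∃ b ∈ A, a < b ∧ b < n ∧ a + n = 2 * b := by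
    intro n hn
    obtain ⟨a, ha, b, hb, hlt, heq⟩ := key n (by omega)
    exact ⟨a, ha, b, hb, by omega, by omega, heq⟩
  exact ⟨main, 32, fun n hn => main n (by omega)⟩
end

section
/- Let n ≥ 32 be an integer, let l ≥ 2 be the integer with 2·4^l ≤ n < 2·4^{l+1}, and let A = ⋃_{l≥0} T_l where T_l = { u·4^l + Σ_{i=0}^{l-1} v_i·4^i : u ∈ {1,2,3,4}, v_i ∈ {1,2} }. Then there exist a ∈ T_l ∪ T_{l-1} and b ∈ T_l ∪ T_{l-1} with 1 ≤ a < b < n and a + n = 2b. -/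
lemma digit_sum (n L : ℕ) :
    n = n / 4 ^ L * 4 ^ L + ∑ i ∈ Finset.range L, (n / 4 ^ i % 4) * 4 ^ i := by
  induction L with
  | zero => simp
  | succ k ih =>
    rw [Finset.sum_range_succ, ← add_assoc]
    have key : n / 4 ^ k = 4 * (n / 4 ^ (k + 1)) + n / 4 ^ k % 4 := by
      rw [pow_succ, ← Nat.div_div_eq_div_mul]; omega
    have key2 : n / 4 ^ k * 4 ^ k = (4 * (n / 4 ^ (k + 1)) + n / 4 ^ k % 4) * 4 ^ k :=
      congrArg (fun x => x * 4 ^ k) key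
    calc n = n / 4 ^ k * 4 ^ k + ∑ i ∈ Finset.range k, (n / 4 ^ i % 4) * 4 ^ i := ih
      _ = _ := by rw [key2]; ring

lemma sum_lt (v : ℕ → ℕ) (h : ∀ i, v i ≤ 2) (k : ℕ) :
    ∑ i ∈ Finset.range k, v i * 4 ^ i < 4 ^ k := by
  induction k with
  | zero => simp
  | succ m ih =>
    rw [Finset.sum_range_succ, pow_succ]
    have h1 := h m
    have h2 : v m * 4 ^ m ≤ 2 * 4 ^ m := Nat.mul_le_mul_right _ h1
    omega

lemma memT (l u : ℕ) (hu1 : 1 ≤ u) (hu2 : u ≤ 4) (v : ℕ → ℕ)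
    (hv : ∀ i, i < l → v i = 1 ∨ v i = 2) :
    u * 4 ^ l + ∑ i ∈ Finset.range l, v i * 4 ^ i ∈ T l :=
  ⟨u, ⟨hu1, hu2⟩, v, hv, rfl⟩

theorem stmt_3 (n l : ℕ) (hn : 32 ≤ n) (hl : 2 ≤ l)
    (h1 : 2 * 4 ^ l ≤ n) (h2 : n < 2 * 4 ^ (l + 1)) :
    ∃ a ∈ T l ∪ T (l - 1), ∃ b ∈ T l ∪ T (l - 1),
      1 ≤ a ∧ a < b ∧ b < n ∧ a + n = 2 * b := by
  obtain ⟨k, rfl⟩ : ∃ k, l = k + 1 := ⟨l - 1, by omega⟩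
  have hP : 0 < 4 ^ (k + 1) := pow_pos (by norm_num) _
  have hPk : 0 < 4 ^ k := pow_pos (by norm_num) _
  set c := n / 4 ^ (k + 1) with hc
  have hc2 : 2 ≤ c := (Nat.le_div_iff_mul_le hP).2 h1
  have hc8 : c < 8 := by
    have : n < 8 * 4 ^ (k + 1) := by
      have : 2 * 4 ^ (k + 1 + 1) = 8 * 4 ^ (k + 1) := by ring
      omega
    exact Nat.div_lt_of_lt_mul (by omega)
  have hn' := digit_sum n (k + 1)
  rw [← hc] at hn'
  have hS : ∀ m : ℕ, ∑ i ∈ Finset.range m, 2 * ((n / 4 ^ i % 4 / 2 + 1) * 4 ^ i)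
      = ∑ i ∈ Finset.range m, (2 - n / 4 ^ i % 4 % 2) * 4 ^ i
        + ∑ i ∈ Finset.range m, (n / 4 ^ i % 4) * 4 ^ i := by
    intro m
    rw [← Finset.sum_add_distrib]
    apply Finset.sum_congr rfl
    intro i _
    have h : 2 * (n / 4 ^ i % 4 / 2 + 1)
        = (2 - n / 4 ^ i % 4 % 2) + n / 4 ^ i % 4 := by omega
    rw [← add_mul, ← h, mul_assoc]
  have hSwlt : ∀ m : ℕ, ∑ i ∈ Finset.range m, (2 - n / 4 ^ i % 4 % 2) * 4 ^ i < 4 ^ m :=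
    fun m => sum_lt _ (fun i => by omega) m
  by_cases h3 : 3 ≤ c
  · -- both terms at level k+1
    refine ⟨(2 - c % 2) * 4 ^ (k + 1) + ∑ i ∈ Finset.range (k + 1), (2 - n / 4 ^ i % 4 % 2) * 4 ^ i,
      Or.inl (memT (k + 1) _ (by omega) (by omega) _ (fun i _ => by omega)),
      (c / 2 + 1) * 4 ^ (k + 1) + ∑ i ∈ Finset.range (k + 1), (n / 4 ^ i % 4 / 2 + 1) * 4 ^ i,
      Or.inl (memT (k + 1) _ (by omega) (by omega) _ (fun i _ => by omega)), ?_⟩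
    have key : ((2 - c % 2) * 4 ^ (k + 1) + ∑ i ∈ Finset.range (k + 1), (2 - n / 4 ^ i % 4 % 2) * 4 ^ i) + n
        = 2 * ((c / 2 + 1) * 4 ^ (k + 1) + ∑ i ∈ Finset.range (k + 1), (n / 4 ^ i % 4 / 2 + 1) * 4 ^ i) := by
      have hb2 : 2 * ((c / 2 + 1) * 4 ^ (k + 1)) = (2 - c % 2) * 4 ^ (k + 1) + c * 4 ^ (k + 1) := by
        have h : 2 * (c / 2 + 1) = (2 - c % 2) + c := by omega
        rw [← mul_assoc, h, add_mul]
      rw [mul_add, Finset.mul_sum, hS (k + 1), hb2]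
      omega
    have han : (2 - c % 2) * 4 ^ (k + 1) + ∑ i ∈ Finset.range (k + 1), (2 - n / 4 ^ i % 4 % 2) * 4 ^ i < n := by
      have hu : (2 - c % 2) * 4 ^ (k + 1) ≤ 2 * 4 ^ (k + 1) := Nat.mul_le_mul_right _ (by omega)
      have hcn : 3 * 4 ^ (k + 1) ≤ c * 4 ^ (k + 1) := Nat.mul_le_mul_right _ h3
      have hSw := hSwlt (k + 1)
      omega
    have hpos := Nat.mul_pos (show 0 < 2 - c % 2 by omega) hP
    refine ⟨by omega, by omega, by omega, key⟩
  · -- c = 2 : a at level k, b at level k+1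
    have hc2' : c = 2 := by omega
    refine ⟨(2 - n / 4 ^ k % 4 % 2) * 4 ^ k + ∑ i ∈ Finset.range k, (2 - n / 4 ^ i % 4 % 2) * 4 ^ i,
      Or.inr (memT k _ (by omega) (by omega) _ (fun i _ => by omega)),
      1 * 4 ^ (k + 1) + ∑ i ∈ Finset.range (k + 1), (n / 4 ^ i % 4 / 2 + 1) * 4 ^ i,
      Or.inl (memT (k + 1) _ (by omega) (by omega) _ (fun i _ => by omega)), ?_⟩
    have key : ((2 - n / 4 ^ k % 4 % 2) * 4 ^ k + ∑ i ∈ Finset.range k, (2 - n / 4 ^ i % 4 % 2) * 4 ^ i) + n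
        = 2 * (1 * 4 ^ (k + 1) + ∑ i ∈ Finset.range (k + 1), (n / 4 ^ i % 4 / 2 + 1) * 4 ^ i) := by
      have hpow : 4 ^ (k + 1) = 4 * 4 ^ k := by ring
      have hn2 := hn'
      rw [hc2'] at hn2
      simp only [Finset.sum_range_succ] at hn2
      rw [mul_add, Finset.mul_sum, hS (k + 1)]
      simp only [Finset.sum_range_succ]
      omega
    have han : (2 - n / 4 ^ k % 4 % 2) * 4 ^ k + ∑ i ∈ Finset.range k, (2 - n / 4 ^ i % 4 % 2) * 4 ^ i < n := by
      have hu : (2 - n / 4 ^ k % 4 % 2) * 4 ^ k ≤ 2 * 4 ^ k := Nat.mul_le_mul_right _ (by omega)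
      have hSw := hSwlt k
      have hpow : 4 ^ (k + 1) = 4 * 4 ^ k := by ring
      omega
    have hpos := Nat.mul_pos (show 0 < 2 - n / 4 ^ k % 4 % 2 by omega) hPk
    refine ⟨by omega, by omega, by omega, key⟩
end

section
/- Let T_l = { u·4^l + Σ_{i=0}^{l-1} v_i·4^i : u ∈ {1,2,3,4}, v_i ∈ {1,2} } and A = ⋃_{l≥0} T_l. For any integer l ≥ 1, any u ∈ {1,2,3,4} and any v_0, …, v_{l-1} ∈ {1,2}, setting m = u·4^l + Σ_{i=0}^{l-1} v_i·4^i, the number of elements of A that are at most m is at most (2u + 6 + v_{l-1})·2^{l-1} − 4. -/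
namespace Stmt7aux

open Finset

def bitv (b : Bool) : ℕ := cond b 2 1

def valb (j : ℕ) (b : Fin j → Bool) : ℕ := ∑ i : Fin j, bitv (b i) * 4 ^ (i : ℕ)

def s (j : ℕ) : ℕ := ∑ i ∈ Finset.range j, 4 ^ i

lemma s_lt (j : ℕ) : s j < 4 ^ j := by
  induction j with
  | zero => simp [s]
  | succ k ih =>
    have h4 : 4 ^ (k + 1) = 4 ^ k * 4 := pow_succ 4 k
    have hs : s (k + 1) = s k + 4 ^ k := Finset.sum_range_succ _ _
    omega

lemma s_succ (j : ℕ) : s (j + 1) = s j + 4 ^ j := Finset.sum_range_succ _ _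

lemma s_mono {a b : ℕ} (h : a ≤ b) : s a ≤ s b :=
  Finset.sum_le_sum_of_subset (Finset.range_subset_range.mpr h)

lemma sum_v_ge {j : ℕ} (v : ℕ → ℕ) (hv : ∀ i, i < j → v i = 1 ∨ v i = 2) :
    s j ≤ ∑ i ∈ Finset.range j, v i * 4 ^ i := by
  apply Finset.sum_le_sum
  intro i hi
  have := hv i (Finset.mem_range.mp hi)
  have h1 : 1 ≤ v i := by omega
  calc 4 ^ i = 1 * 4 ^ i := (one_mul _).symm
    _ ≤ v i * 4 ^ i := Nat.mul_le_mul_right _ h1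

lemma sum_v_le {j : ℕ} (v : ℕ → ℕ) (hv : ∀ i, i < j → v i = 1 ∨ v i = 2) :
    ∑ i ∈ Finset.range j, v i * 4 ^ i ≤ 2 * s j := by
  rw [s, Finset.mul_sum]
  apply Finset.sum_le_sum
  intro i hi
  have := hv i (Finset.mem_range.mp hi)
  have h1 : v i ≤ 2 := by omega
  exact Nat.mul_le_mul_right _ h1

lemma sum_eq_valb {j : ℕ} (v : ℕ → ℕ) (hv : ∀ i, i < j → v i = 1 ∨ v i = 2) :
    ∑ i ∈ Finset.range j, v i * 4 ^ i = valb j (fun i => decide (v i = 2)) := by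
  rw [valb, Finset.sum_range (fun i => v i * 4 ^ i)]
  apply Finset.sum_congr rfl
  intro i _
  rcases hv i i.2 with h | h <;> simp [h, bitv]

def Tfin (j : ℕ) : Finset ℕ :=
  Finset.image (fun p : ℕ × (Fin j → Bool) => p.1 * 4 ^ j + valb j p.2)
    (Finset.Icc 1 4 ×ˢ Finset.univ)

lemma card_Tfin (j : ℕ) : (Tfin j).card ≤ 4 * 2 ^ j := by
  calc (Tfin j).card ≤ ((Finset.Icc 1 4) ×ˢ (Finset.univ : Finset (Fin j → Bool))).card :=
        Finset.card_image_le
    _ = 4 * 2 ^ j := by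
        rw [Finset.card_product, Finset.card_univ]
        simp

lemma mem_Tfin {n j : ℕ} (hn : n ∈ T j) : n ∈ Tfin j := by
  obtain ⟨u', hu', v', hv', rfl⟩ := hn
  refine Finset.mem_image.mpr ⟨(u', fun i => decide (v' i = 2)), ?_, ?_⟩
  · rw [Finset.mem_product]
    exact ⟨Finset.mem_Icc.mpr hu', Finset.mem_univ _⟩
  · rw [sum_eq_valb v' hv']

lemma geom2 (k : ℕ) : ∑ j ∈ Finset.range k, (2 : ℕ) ^ j = 2 ^ k - 1 := by
  induction k with
  | zero => simp
  | succ n ih =>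
    rw [Finset.sum_range_succ, ih]
    have h1 : 1 ≤ (2:ℕ) ^ n := Nat.one_le_two_pow
    have h2 : (2:ℕ) ^ (n + 1) = 2 ^ n * 2 := pow_succ 2 n
    omega

lemma main_nat (l' u : ℕ) (hu : 1 ≤ u ∧ u ≤ 4) (v : ℕ → ℕ)
    (hv : ∀ i, i < l' + 1 → v i = 1 ∨ v i = 2)
    (m : ℕ) (hm : m = u * 4 ^ (l' + 1) + ∑ i ∈ Finset.range (l' + 1), v i * 4 ^ i) :
    cnt A m ≤ 4 * (2 ^ (l' + 1) - 1) + (2 * u - 2 + v l') * 2 ^ l' := by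
  classical
  set f : ℕ × ℕ × (Fin l' → Bool) → ℕ :=
    fun p => p.1 * 4 ^ (l' + 1) + p.2.1 * 4 ^ l' + valb l' p.2.2 with hf
  set D : Finset (ℕ × ℕ × (Fin l' → Bool)) :=
    (Finset.Icc 1 (u - 1) ×ˢ Finset.Icc 1 2 ×ˢ Finset.univ) ∪
      ({u} ×ˢ Finset.Icc 1 (v l') ×ˢ Finset.univ) with hD
  set Big : Finset ℕ := ((Finset.range (l' + 1)).biUnion Tfin) ∪ D.image f with hBig
  -- facts about m
  have hQ : s l' < 4 ^ l' := s_lt l'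
  have hP : s (l' + 1) < 4 ^ (l' + 1) := s_lt (l' + 1)
  have hPQ : (4:ℕ) ^ (l' + 1) = 4 ^ l' * 4 := pow_succ 4 l'
  have hS1 : s (l' + 1) = s l' + 4 ^ l' := s_succ l'
  have hvl : v l' = 1 ∨ v l' = 2 := hv l' (by omega)
  have hvlb : 1 ≤ v l' ∧ v l' ≤ 2 := by rcases hvl with h | h <;> omega
  have hmsplit : m = u * 4 ^ (l' + 1) + v l' * 4 ^ l' + ∑ i ∈ Finset.range l', v i * 4 ^ i := by
    rw [hm, Finset.sum_range_succ]; ring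
  have htail_le : ∑ i ∈ Finset.range l', v i * 4 ^ i ≤ 2 * s l' :=
    sum_v_le v (fun i hi => hv i (by omega))
  have hsub : A ∩ Set.Iic m ⊆ ↑Big := by
    rintro n ⟨hnA, hnm⟩
    have hnm' : n ≤ m := hnm
    rw [A, Set.mem_iUnion] at hnA
    obtain ⟨j, hnT⟩ := hnA
    obtain ⟨u', hu', v', hv', hneq⟩ := hnT
    have htail'_ge : s j ≤ ∑ i ∈ Finset.range j, v' i * 4 ^ i := sum_v_ge v' hv'
    by_cases hj : j ≤ l'
    · apply Finset.mem_coe.mpr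
      apply Finset.mem_union_left
      exact Finset.mem_biUnion.mpr ⟨j, Finset.mem_range.mpr (by omega),
        mem_Tfin ⟨u', hu', v', hv', hneq⟩⟩
    by_cases hj2 : j = l' + 1
    · subst hj2
      have hsplit : n = u' * 4 ^ (l' + 1) + v' l' * 4 ^ l' + ∑ i ∈ Finset.range l', v' i * 4 ^ i := by
        rw [hneq, Finset.sum_range_succ]; ring
      have htail' : s l' ≤ ∑ i ∈ Finset.range l', v' i * 4 ^ i :=
        sum_v_ge v' (fun i hi => hv' i (by omega))
      have hvl' : v' l' = 1 ∨ v' l' = 2 := hv' l' (by omega)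
      have hvl'b : 1 ≤ v' l' ∧ v' l' ≤ 2 := by rcases hvl' with h | h <;> omega
      -- u' ≤ u
      have hu'le : u' ≤ u := by
        by_contra hcon
        push_neg at hcon
        have h1 : (u + 1) * 4 ^ (l' + 1) ≤ u' * 4 ^ (l' + 1) :=
          Nat.mul_le_mul_right _ (by omega)
        have h2 : (u + 1) * 4 ^ (l' + 1) = u * 4 ^ (l' + 1) + 4 ^ (l' + 1) := by ring
        -- n ≥ u'*4^(l'+1) + s(l'+1) ≥ u*4^(l'+1) + 4^(l'+1) + s l' + 1
        -- m ≤ u*4^(l'+1) + v l' * 4^l' + 2 s l' ≤ u*4^(l'+1) + 2*4^l' + 2 s l'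
        have hvle : v l' * 4 ^ l' ≤ 2 * 4 ^ l' := Nat.mul_le_mul_right _ (by omega)
        have hvge1 : 1 * 4 ^ l' ≤ v' l' * 4 ^ l' := Nat.mul_le_mul_right _ (by omega)
        omega
      rcases Nat.lt_or_ge u' u with hlt | hge
      · -- first component of D
        apply Finset.mem_coe.mpr
        apply Finset.mem_union_right
        refine Finset.mem_image.mpr ⟨(u', v' l', fun i => decide (v' i = 2)), ?_, ?_⟩
        · rw [hD]
          apply Finset.mem_union_left
          rw [Finset.mem_product, Finset.mem_product]
          exact ⟨Finset.mem_Icc.mpr ⟨hu'.1, by omega⟩,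
            Finset.mem_Icc.mpr ⟨hvl'b.1, hvl'b.2⟩, Finset.mem_univ _⟩
        · rw [hf]
          simp only
          rw [hsplit, sum_eq_valb v' (fun i hi => hv' i (by omega))]
      · have hueq : u' = u := by omega
        subst hueq
        have hv'le : v' l' ≤ v l' := by
          by_contra hcon
          push_neg at hcon
          have h1 : (v l' + 1) * 4 ^ l' ≤ v' l' * 4 ^ l' :=
            Nat.mul_le_mul_right _ (by omega)
          have h2 : (v l' + 1) * 4 ^ l' = v l' * 4 ^ l' + 4 ^ l' := by ring
          omega
        apply Finset.mem_coe.mpr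
        apply Finset.mem_union_right
        refine Finset.mem_image.mpr ⟨(u', v' l', fun i => decide (v' i = 2)), ?_, ?_⟩
        · rw [hD]
          apply Finset.mem_union_right
          rw [Finset.mem_product, Finset.mem_product]
          exact ⟨Finset.mem_singleton.mpr rfl,
            Finset.mem_Icc.mpr ⟨hvl'b.1, hv'le⟩, Finset.mem_univ _⟩
        · rw [hf]
          simp only
          rw [hsplit, sum_eq_valb v' (fun i hi => hv' i (by omega))]
    · -- j ≥ l' + 2 : contradiction
      exfalso
      have hj' : l' + 2 ≤ j := by omega
      have hpow : (4:ℕ) ^ (l' + 2) ≤ 4 ^ j := Nat.pow_le_pow_right (by norm_num) hj'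
      have hsj : s (l' + 2) ≤ s j := s_mono hj'
      have hS2 : s (l' + 2) = s (l' + 1) + 4 ^ (l' + 1) := s_succ (l' + 1)
      have hpow2 : (4:ℕ) ^ (l' + 2) = 4 ^ (l' + 1) * 4 := pow_succ 4 (l' + 1)
      have h1 : 1 * 4 ^ j ≤ u' * 4 ^ j := Nat.mul_le_mul_right _ hu'.1
      have h2 : u * 4 ^ (l' + 1) ≤ 4 * 4 ^ (l' + 1) := Nat.mul_le_mul_right _ hu.2
      have hvle : v l' * 4 ^ l' ≤ 2 * 4 ^ l' := Nat.mul_le_mul_right _ (by omega)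
      have hge : u' * 4 ^ j + s j ≤ n := by
        rw [hneq]; omega
      omega
  -- count
  have hcount : cnt A m ≤ Big.card := by
    rw [cnt]
    calc (A ∩ Set.Iic m).ncard ≤ (↑Big : Set ℕ).ncard :=
          Set.ncard_le_ncard hsub (Finset.finite_toSet Big)
      _ = Big.card := Set.ncard_coe_finset Big
  have hcard : Big.card ≤ 4 * (2 ^ (l' + 1) - 1) + (2 * u - 2 + v l') * 2 ^ l' := by
    calc Big.card ≤ ((Finset.range (l' + 1)).biUnion Tfin).card + (D.image f).card :=
          Finset.card_union_le _ _
      _ ≤ (∑ j ∈ Finset.range (l' + 1), (Tfin j).card) + D.card :=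
          Nat.add_le_add (Finset.card_biUnion_le) (Finset.card_image_le)
      _ ≤ (∑ j ∈ Finset.range (l' + 1), 4 * 2 ^ j) + D.card :=
          Nat.add_le_add_right (Finset.sum_le_sum (fun j _ => card_Tfin j)) _
      _ ≤ 4 * (2 ^ (l' + 1) - 1) + (2 * u - 2 + v l') * 2 ^ l' := by
          have hsum : ∑ j ∈ Finset.range (l' + 1), 4 * 2 ^ j = 4 * (2 ^ (l' + 1) - 1) := by
            rw [← Finset.mul_sum, geom2]
          rw [hsum]
          apply Nat.add_le_add_left
          have hDcard : D.card ≤ (u - 1) * (2 * 2 ^ l') + 1 * (v l' * 2 ^ l') := by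
            calc D.card ≤ (Finset.Icc 1 (u - 1) ×ˢ Finset.Icc 1 2 ×ˢ
                  (Finset.univ : Finset (Fin l' → Bool))).card +
                  ({u} ×ˢ Finset.Icc 1 (v l') ×ˢ
                  (Finset.univ : Finset (Fin l' → Bool))).card := Finset.card_union_le _ _
              _ = (u - 1) * (2 * 2 ^ l') + 1 * (v l' * 2 ^ l') := by
                  rw [Finset.card_product, Finset.card_product, Finset.card_product,
                    Finset.card_product, Finset.card_univ, Finset.card_singleton]
                  simp [Nat.card_Icc]
          have key : (u - 1) * (2 * 2 ^ l') + 1 * (v l' * 2 ^ l') ≤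
              (2 * u - 2 + v l') * 2 ^ l' := by
            have e1 : (u - 1) * (2 * 2 ^ l') = ((u - 1) * 2) * 2 ^ l' := by ring
            have e2 : (2 * u - 2 + v l') * 2 ^ l' = ((u - 1) * 2 + v l') * 2 ^ l' := by
              congr 1; omega
            rw [e1, e2, one_mul, Nat.add_mul]
          omega
  omega

end Stmt7aux

theorem stmt_7 (l u : ℕ) (hl : 1 ≤ l) (hu : 1 ≤ u ∧ u ≤ 4) (v : ℕ → ℕ)
    (hv : ∀ i, i < l → v i = 1 ∨ v i = 2)
    (m : ℕ) (hm : m = u * 4 ^ l + ∑ i ∈ Finset.range l, v i * 4 ^ i) :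
    (cnt A m : ℝ) ≤ (2 * (u : ℝ) + 6 + (v (l - 1) : ℝ)) * 2 ^ (l - 1) - 4 := by
  obtain ⟨l', rfl⟩ : ∃ l', l = l' + 1 := ⟨l - 1, by omega⟩
  simp only [Nat.add_sub_cancel]
  have key := Stmt7aux.main_nat l' u hu v hv m hm
  have h2 : (1 : ℕ) ≤ 2 ^ (l' + 1) := Nat.one_le_two_pow
  have h3 : 2 ≤ 2 * u := by omega
  calc (cnt A m : ℝ) ≤ ((4 * (2 ^ (l' + 1) - 1) + (2 * u - 2 + v l') * 2 ^ l' : ℕ) : ℝ) := by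
        exact_mod_cast key
    _ = (2 * (u : ℝ) + 6 + (v l' : ℝ)) * 2 ^ l' - 4 := by
        push_cast [Nat.cast_sub h2, Nat.cast_sub h3]
        ring
end

section
/- Let T_l = { u·4^l + Σ_{i=0}^{l-1} v_i·4^i : u ∈ {1,2,3,4}, v_i ∈ {1,2} } and A = ⋃_{l≥0} T_l. Let l ≥ 1, u ∈ {1,2,3,4}, v_0, …, v_{l-1} ∈ {1,2}, and set m = u·4^l + Σ_{i=0}^{l-1} v_i·4^i. If v_i = 1 for some index 0 ≤ i ≤ l−1, then m + 4^i ∈ A and A(m + 4^i) = A(m) + 2^i, where A(n) denotes the number of elements of A that are at most n. -/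
lemma sum_digits_lt (v : ℕ → ℕ) (k : ℕ) (hv : ∀ j, j < k → v j ≤ 2) :
    ∑ j ∈ Finset.range k, v j * 4 ^ j < 4 ^ k := by
  induction k with
  | zero => simp
  | succ n ih =>
    have h1 := ih (fun j hj => hv j (by omega))
    have h2 : v n * 4 ^ n ≤ 2 * 4 ^ n :=
      Nat.mul_le_mul_right _ (hv n (by omega))
    rw [Finset.sum_range_succ, pow_succ]
    generalize hS : ∑ j ∈ Finset.range n, v j * 4 ^ j = S at *
    generalize hx : (4:ℕ) ^ n = x at *
    linarith

lemma three_le_sum (v : ℕ → ℕ) (k : ℕ) (hv : ∀ j, j < k → 1 ≤ v j) :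
    4 ^ k ≤ 3 * ∑ j ∈ Finset.range k, v j * 4 ^ j + 1 := by
  induction k with
  | zero => simp
  | succ n ih =>
    have h1 := ih (fun j hj => hv j (by omega))
    have h2 : 4 ^ n ≤ v n * 4 ^ n :=
      le_mul_of_one_le_left (Nat.zero_le _) (hv n (by omega))
    rw [Finset.sum_range_succ, pow_succ]
    generalize hS : ∑ j ∈ Finset.range n, v j * 4 ^ j = S at *
    generalize hx : (4:ℕ) ^ n = x at *
    linarith

lemma T_lt {k k' n n' : ℕ} (hkk : k' < k) (hn' : n' ∈ T k') (hn : n ∈ T k) : n' < n := by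
  obtain ⟨u', ⟨hu'1, hu'4⟩, v', hv', rfl⟩ := hn'
  obtain ⟨u, ⟨hu1, hu4⟩, w, hw, rfl⟩ := hn
  have hS' : ∑ j ∈ Finset.range k', v' j * 4 ^ j < 4 ^ k' :=
    sum_digits_lt _ _ (fun j hj => by rcases hv' j hj with h | h <;> omega)
  have hS : 4 ^ k ≤ 3 * ∑ j ∈ Finset.range k, w j * 4 ^ j + 1 :=
    three_le_sum _ _ (fun j hj => by rcases hw j hj with h | h <;> omega)
  obtain ⟨k'', rfl⟩ : ∃ k'', k = k'' + 1 := ⟨k - 1, by omega⟩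
  have h1 : (4:ℕ) ^ k' ≤ 4 ^ k'' := Nat.pow_le_pow_right (by norm_num) (by omega)
  have hA : u' * 4 ^ k' ≤ 4 * 4 ^ k' := Nat.mul_le_mul_right _ hu'4
  have hB : (4:ℕ) ^ (k'' + 1) ≤ u * 4 ^ (k'' + 1) :=
    le_mul_of_one_le_left (Nat.zero_le _) hu1
  have hC : (4:ℕ) ^ (k'' + 1) = 4 * 4 ^ k'' := by rw [pow_succ]; ring
  have hx : 1 ≤ (4:ℕ) ^ k'' := Nat.one_le_pow _ _ (by norm_num)
  generalize hS1 : ∑ j ∈ Finset.range k', v' j * 4 ^ j = S1 at *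
  generalize hS2 : ∑ j ∈ Finset.range (k'' + 1), w j * 4 ^ j = S2 at *
  generalize hy : (4:ℕ) ^ k' = y at *
  generalize hz : (4:ℕ) ^ (k'' + 1) = z at *
  generalize hxx : (4:ℕ) ^ k'' = x at *
  linarith

lemma digits_unique (k : ℕ) (v v' : ℕ → ℕ) (hv : ∀ j, j < k → v j ≤ 2)
    (hv' : ∀ j, j < k → v' j ≤ 2)
    (h : ∑ j ∈ Finset.range k, v j * 4 ^ j = ∑ j ∈ Finset.range k, v' j * 4 ^ j) :
    ∀ j, j < k → v j = v' j := by
  induction k with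
  | zero => intro j hj; omega
  | succ n ih =>
    rw [Finset.sum_range_succ, Finset.sum_range_succ] at h
    have hS := sum_digits_lt v n (fun j hj => hv j (by omega))
    have hS' := sum_digits_lt v' n (fun j hj => hv' j (by omega))
    have hvn : v n = v' n := by
      by_contra hne
      rcases Nat.lt_or_ge (v n) (v' n) with hlt | hge
      · have h3 : (v n + 1) * 4 ^ n ≤ v' n * 4 ^ n := Nat.mul_le_mul_right _ hlt
        have h4 : (v n + 1) * 4 ^ n = v n * 4 ^ n + 4 ^ n := by ring
        generalize hS1 : ∑ j ∈ Finset.range n, v j * 4 ^ j = S1 at *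
        generalize hS2 : ∑ j ∈ Finset.range n, v' j * 4 ^ j = S2 at *
        linarith
      · have hlt : v' n < v n := by omega
        have h3 : (v' n + 1) * 4 ^ n ≤ v n * 4 ^ n := Nat.mul_le_mul_right _ hlt
        have h4 : (v' n + 1) * 4 ^ n = v' n * 4 ^ n + 4 ^ n := by ring
        generalize hS1 : ∑ j ∈ Finset.range n, v j * 4 ^ j = S1 at *
        generalize hS2 : ∑ j ∈ Finset.range n, v' j * 4 ^ j = S2 at *
        linarith
    have hSS : ∑ j ∈ Finset.range n, v j * 4 ^ j = ∑ j ∈ Finset.range n, v' j * 4 ^ j := by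
      rw [hvn] at h
      exact Nat.add_right_cancel h
    intro j hj
    rcases Nat.lt_or_ge j n with h5 | h5
    · exact ih (fun a ha => hv a (by omega)) (fun a ha => hv' a (by omega)) hSS j h5
    · have : j = n := by omega
      rw [this, hvn]

theorem stmt_9 (l u : ℕ) (hl : 1 ≤ l) (hu : 1 ≤ u ∧ u ≤ 4) (v : ℕ → ℕ)
    (hv : ∀ i, i < l → v i = 1 ∨ v i = 2)
    (m : ℕ) (hm : m = u * 4 ^ l + ∑ i ∈ Finset.range l, v i * 4 ^ i)
    (i : ℕ) (hi : i < l) (hvi : v i = 1) :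
    m + 4 ^ i ∈ A ∧ cnt A (m + 4 ^ i) = cnt A m + 2 ^ i := by
  obtain ⟨hu1, hu4⟩ := hu
  have hv2 : ∀ j, j < l → v j ≤ 2 := fun j hj => by rcases hv j hj with h | h <;> omega
  set s : ℕ := ∑ j ∈ Finset.range i, v j * 4 ^ j with hs
  set H : ℕ := u * 4 ^ l + ∑ j ∈ Finset.Ico (i + 1) l, v j * 4 ^ j with hHdef
  have hsplit : ∀ d : ℕ → ℕ, ∑ j ∈ Finset.range l, d j * 4 ^ j
      = ∑ j ∈ Finset.range i, d j * 4 ^ j + d i * 4 ^ i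
        + ∑ j ∈ Finset.Ico (i + 1) l, d j * 4 ^ j := by
    intro d
    rw [← Finset.sum_range_add_sum_Ico _ (show i + 1 ≤ l by omega), Finset.sum_range_succ]
  have hmH : m = H + 4 ^ i + s := by
    rw [hm, hsplit v, hvi]; ring
  have hslt : s < 4 ^ i := sum_digits_lt v i (fun j hj => hv2 j (by omega))
  set sw : Finset ℕ → ℕ := fun w => ∑ j ∈ Finset.range i, (if j ∈ w then 2 else 1) * 4 ^ j
    with hswdef
  set g : Finset ℕ → ℕ := fun w => H + (if sw w ≤ s then 2 else 1) * 4 ^ i + sw w with hgdef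
  have hswlt : ∀ w, sw w < 4 ^ i := fun w =>
    sum_digits_lt _ _ (fun j hj => by show (if j ∈ w then 2 else 1) ≤ 2; split <;> omega)
  -- claim 1 : g w ∈ T l
  have hgT : ∀ w, g w ∈ T l := by
    intro w
    refine ⟨u, ⟨hu1, hu4⟩, fun j => if j < i then (if j ∈ w then 2 else 1)
      else if j = i then (if sw w ≤ s then 2 else 1) else v j, ?_, ?_⟩
    · intro j hj
      beta_reduce
      split
      · split
        · right; rfl
        · left; rfl
      · split
        · split
          · right; rfl
          · left; rfl
        · exact hv j hj
    · rw [hsplit]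
      have e1 : ∑ j ∈ Finset.range i, (if j < i then (if j ∈ w then 2 else 1)
          else if j = i then (if sw w ≤ s then 2 else 1) else v j) * 4 ^ j = sw w := by
        apply Finset.sum_congr rfl
        intro j hj
        rw [if_pos (Finset.mem_range.mp hj)]
      have e2 : (if i < i then (if i ∈ w then 2 else 1)
          else if i = i then (if sw w ≤ s then 2 else 1) else v i) = (if sw w ≤ s then 2 else 1) := by
        rw [if_neg (lt_irrefl i), if_pos rfl]
      have e3 : ∑ j ∈ Finset.Ico (i + 1) l, (if j < i then (if j ∈ w then 2 else 1)
          else if j = i then (if sw w ≤ s then 2 else 1) else v j) * 4 ^ j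
          = ∑ j ∈ Finset.Ico (i + 1) l, v j * 4 ^ j := by
        apply Finset.sum_congr rfl
        intro j hj
        have hj1 := (Finset.mem_Ico.mp hj).1
        rw [if_neg (by omega), if_neg (by omega)]
      rw [e1, e2, e3]
      simp only [hgdef, hHdef]
      ring
  have hgA : ∀ w, g w ∈ A := fun w => Set.mem_iUnion.mpr ⟨l, hgT w⟩
  -- claim 1' : g w ∈ Ioc m (m + 4^i)
  have hgIoc : ∀ w, g w ∈ Set.Ioc m (m + 4 ^ i) := by
    intro w
    have h1 := hswlt w
    rw [Set.mem_Ioc, hmH]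
    simp only [hgdef]
    split
    · omega
    · omega
  -- m + 4^i ∈ A via w0
  have hm4 : m + 4 ^ i = g (Finset.filter (fun j => v j = 2) (Finset.range i)) := by
    have hsw0 : sw (Finset.filter (fun j => v j = 2) (Finset.range i)) = s := by
      rw [hswdef, hs]
      apply Finset.sum_congr rfl
      intro j hj
      rcases hv j (lt_of_lt_of_le (Finset.mem_range.mp hj) hi.le) with h | h
      · rw [if_neg (by simp [Finset.mem_filter, h]), h]
      · rw [if_pos (by simp [Finset.mem_filter, Finset.mem_range.mp hj, h]), h]
    simp only [hgdef]
    rw [hsw0, if_pos le_rfl, hmH]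
    ring
  have hmT : m ∈ T l := ⟨u, ⟨hu1, hu4⟩, v, hv, hm⟩
  have hm4T : m + 4 ^ i ∈ T l := by rw [hm4]; exact hgT _
  -- claim 2 : surjectivity
  have hsub : ∀ a ∈ A, a ∈ Set.Ioc m (m + 4 ^ i) → ∃ w, w ⊆ Finset.range i ∧ g w = a := by
    intro a ha hioc
    obtain ⟨ham, ham'⟩ := hioc
    rw [A, Set.mem_iUnion] at ha
    obtain ⟨l', hal'⟩ := ha
    have hl' : l' = l := by
      by_contra h
      rcases Nat.lt_or_ge l' l with h1 | h1
      · have := T_lt h1 hal' hmT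
        omega
      · have := T_lt (show l < l' by omega) hm4T hal'
        omega
    obtain ⟨u', ⟨hu'1, hu'4⟩, v', hv'dig, haeq⟩ := hal'
    rw [hl'] at hv'dig haeq
    have hv'2 : ∀ j, j < l → v' j ≤ 2 := fun j hj => by rcases hv'dig j hj with h | h <;> omega
    set s' : ℕ := ∑ j ∈ Finset.range i, v' j * 4 ^ j with hs'
    set H' : ℕ := u' * 4 ^ l + ∑ j ∈ Finset.Ico (i + 1) l, v' j * 4 ^ j with hH'def
    have heq : a = H' + v' i * 4 ^ i + s' := by
      rw [haeq, hsplit v', hH'def]; ring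
    have hs'lt : s' < 4 ^ i := sum_digits_lt v' i (fun j hj => hv'2 j (by omega))
    have hv'i1 : 1 ≤ v' i := by rcases hv'dig i hi with h | h <;> omega
    have hv'i2 : v' i ≤ 2 := hv'2 i hi
    have hdvd : ∀ (u'' : ℕ) (v'' : ℕ → ℕ),
        (4:ℕ) ^ (i + 1) ∣ u'' * 4 ^ l + ∑ j ∈ Finset.Ico (i + 1) l, v'' j * 4 ^ j := by
      intro u'' v''
      apply Nat.dvd_add
      · exact Dvd.dvd.mul_left (pow_dvd_pow 4 (by omega)) u''
      · exact Finset.dvd_sum fun j hj =>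
          Dvd.dvd.mul_left (pow_dvd_pow 4 (Finset.mem_Ico.mp hj).1) _
    have hpow : (4:ℕ) ^ (i + 1) = 4 * 4 ^ i := by rw [pow_succ]; ring
    have hvpile : v' i * 4 ^ i ≤ 2 * 4 ^ i := Nat.mul_le_mul_right _ hv'i2
    have hvpige : 4 ^ i ≤ v' i * 4 ^ i := le_mul_of_one_le_left (Nat.zero_le _) hv'i1
    have hHH : H' = H := by
      have hdH : (4:ℕ) ^ (i + 1) ∣ H := hdvd u v
      have hdH' : (4:ℕ) ^ (i + 1) ∣ H' := hdvd u' v'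
      rcases lt_trichotomy H' H with hc | hc | hc
      · exfalso
        have h4 : H' + 4 ^ (i + 1) ≤ H := by
          obtain ⟨c1, hc1⟩ := hdH
          obtain ⟨c2, hc2⟩ := hdH'
          rw [hc1, hc2] at hc ⊢
          have hcc : c2 < c1 := lt_of_mul_lt_mul_left hc (Nat.zero_le _)
          calc 4 ^ (i + 1) * c2 + 4 ^ (i + 1) = 4 ^ (i + 1) * (c2 + 1) := by ring
          _ ≤ 4 ^ (i + 1) * c1 := Nat.mul_le_mul_left _ (by omega)
        rw [hmH] at ham
        rw [heq] at ham
        generalize (4:ℕ) ^ i = x at *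
        omega
      · exact hc
      · exfalso
        have h4 : H + 4 ^ (i + 1) ≤ H' := by
          obtain ⟨c1, hc1⟩ := hdH
          obtain ⟨c2, hc2⟩ := hdH'
          rw [hc1, hc2] at hc ⊢
          have hcc : c1 < c2 := lt_of_mul_lt_mul_left hc (Nat.zero_le _)
          calc 4 ^ (i + 1) * c1 + 4 ^ (i + 1) = 4 ^ (i + 1) * (c1 + 1) := by ring
          _ ≤ 4 ^ (i + 1) * c2 := Nat.mul_le_mul_left _ (by omega)
        rw [hmH] at ham'
        rw [heq] at ham'
        generalize (4:ℕ) ^ i = x at *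
        omega
    refine ⟨Finset.filter (fun j => v' j = 2) (Finset.range i), Finset.filter_subset _ _, ?_⟩
    have hsww : sw (Finset.filter (fun j => v' j = 2) (Finset.range i)) = s' := by
      rw [hswdef, hs']
      apply Finset.sum_congr rfl
      intro j hj
      rcases hv'dig j (lt_of_lt_of_le (Finset.mem_range.mp hj) hi.le) with h | h
      · rw [if_neg (by simp [Finset.mem_filter, h]), h]
      · rw [if_pos (by simp [Finset.mem_filter, Finset.mem_range.mp hj, h]), h]
    simp only [hgdef]
    rw [hsww, heq, hHH]
    rw [hmH, heq, hHH] at ham ham'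
    rcases hv'dig i hi with h1 | h1
    · rw [h1] at ham ham' ⊢
      rw [if_neg (by generalize (4:ℕ) ^ i = x at *; omega)]
    · rw [h1] at ham ham' ⊢
      rw [if_pos (by generalize (4:ℕ) ^ i = x at *; omega)]
  -- injectivity
  have hswinj : ∀ w1, w1 ⊆ Finset.range i → ∀ w2, w2 ⊆ Finset.range i →
      sw w1 = sw w2 → w1 = w2 := by
    intro w1 h1 w2 h2 hsweq
    have hdig := digits_unique i (fun j => if j ∈ w1 then 2 else 1)
      (fun j => if j ∈ w2 then 2 else 1)
      (fun j hj => by beta_reduce; split <;> omega)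
      (fun j hj => by beta_reduce; split <;> omega) hsweq
    ext j
    by_cases hj : j < i
    · have hh := hdig j hj
      by_cases hj1 : j ∈ w1 <;> by_cases hj2 : j ∈ w2 <;>
        simp [hj1, hj2] at hh ⊢
    · constructor
      · intro hmem; exact absurd (Finset.mem_range.mp (h1 hmem)) hj
      · intro hmem; exact absurd (Finset.mem_range.mp (h2 hmem)) hj
  have hginj : Set.InjOn g ((Finset.range i).powerset : Finset (Finset ℕ)) := by
    intro w1 h1 w2 h2 hgeq
    rw [Finset.mem_coe, Finset.mem_powerset] at h1 h2
    have hs1 := hswlt w1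
    have hs2 := hswlt w2
    simp only [hgdef] at hgeq
    apply hswinj w1 h1 w2 h2
    split at hgeq <;> split at hgeq <;> generalize (4:ℕ) ^ i = x at * <;> omega
  -- the interval equality
  have hIoc : A ∩ Set.Ioc m (m + 4 ^ i) = ↑((Finset.range i).powerset.image g) := by
    ext a
    simp only [Set.mem_inter_iff, Finset.coe_image, Set.mem_image, Finset.mem_coe,
      Finset.mem_powerset]
    constructor
    · rintro ⟨ha, hioc⟩
      obtain ⟨w, hw, hgw⟩ := hsub a ha hioc
      exact ⟨w, hw, hgw⟩
    · rintro ⟨w, hw, rfl⟩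
      exact ⟨hgA w, hgIoc w⟩
  have hcard : (A ∩ Set.Ioc m (m + 4 ^ i)).ncard = 2 ^ i := by
    rw [hIoc, Set.ncard_coe_finset, Finset.card_image_of_injOn hginj,
      Finset.card_powerset, Finset.card_range]
  constructor
  · rw [hm4]; exact hgA _
  · have hfin1 : (A ∩ Set.Iic m).Finite := Set.Finite.inter_of_right (Set.finite_Iic m) A
    have hfin2 : (A ∩ Set.Ioc m (m + 4 ^ i)).Finite :=
      Set.Finite.inter_of_right (Set.finite_Ioc m (m + 4 ^ i)) A
    have hdisj : Disjoint (A ∩ Set.Iic m) (A ∩ Set.Ioc m (m + 4 ^ i)) :=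
      Disjoint.mono inf_le_right inf_le_right (Set.Iic_disjoint_Ioc le_rfl)
    have hun : A ∩ Set.Iic (m + 4 ^ i) = (A ∩ Set.Iic m) ∪ (A ∩ Set.Ioc m (m + 4 ^ i)) := by
      rw [← Set.inter_union_distrib_left, Set.Iic_union_Ioc_eq_Iic (by omega)]
    rw [cnt, cnt, hun, Set.ncard_union_eq hdisj hfin1 hfin2, hcard]
end

section
/- Let T_l = { u·4^l + Σ_{i=0}^{l-1} v_i·4^i : u ∈ {1,2,3,4}, v_i ∈ {1,2} } and A = ⋃_{l≥0} T_l. Let l ≥ 1, u ∈ {1,2,3,4}, v_0, …, v_{l-1} ∈ {1,2}, and set m = u·4^l + Σ_{i=0}^{l-1} v_i·4^i. If v_i = 1 for some index 0 ≤ i ≤ l−1, then A(m + 4^i)/√(m + 4^i) > A(m)/√m, where A(n) denotes the number of elements of A that are at most n. -/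
lemma sum_pow4 (k : ℕ) : 3 * ∑ j ∈ Finset.range k, 4 ^ j = 4 ^ k - 1 := by
  induction k with
  | zero => simp
  | succ n ih =>
    rw [Finset.sum_range_succ, pow_succ]
    have h1 : 1 ≤ 4 ^ n := Nat.one_le_pow _ _ (by norm_num)
    omega

lemma sum_pow2 (k : ℕ) : ∑ j ∈ Finset.range k, 2 ^ j = 2 ^ k - 1 := by
  induction k with
  | zero => simp
  | succ n ih =>
    rw [Finset.sum_range_succ, pow_succ]
    have h1 : 1 ≤ 2 ^ n := Nat.one_le_pow _ _ (by norm_num)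
    omega

lemma digits_le (k : ℕ) (d : ℕ → ℕ) (hd : ∀ j, j < k → d j ≤ 2) :
    ∑ j ∈ Finset.range k, d j * 4 ^ j ≤ 4 ^ k - 1 := by
  induction k with
  | zero => simp
  | succ n ih =>
    rw [Finset.sum_range_succ, pow_succ]
    have h1 : 1 ≤ 4 ^ n := Nat.one_le_pow _ _ (by norm_num)
    have h2 : ∑ j ∈ Finset.range n, d j * 4 ^ j ≤ 4 ^ n - 1 :=
      ih (fun j hj => hd j (by omega))
    have h4 : d n * 4 ^ n ≤ 2 * 4 ^ n := Nat.mul_le_mul_right _ (hd n (by omega))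
    omega

lemma digits_le2 (k : ℕ) (d : ℕ → ℕ) (hd : ∀ j, j < k → d j ≤ 2) :
    3 * ∑ j ∈ Finset.range k, d j * 4 ^ j ≤ 2 * (4 ^ k - 1) := by
  have h1 : ∑ j ∈ Finset.range k, d j * 4 ^ j ≤ ∑ j ∈ Finset.range k, 2 * 4 ^ j := by
    apply Finset.sum_le_sum
    intro j hj
    exact Nat.mul_le_mul_right _ (hd j (Finset.mem_range.mp hj))
  have h2 : ∑ j ∈ Finset.range k, 2 * 4 ^ j = 2 * ∑ j ∈ Finset.range k, 4 ^ j :=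
    (Finset.mul_sum _ _ _).symm
  have h3 := sum_pow4 k
  omega

lemma digits_ge (k : ℕ) (d : ℕ → ℕ) (hd : ∀ j, j < k → 1 ≤ d j) :
    4 ^ k - 1 ≤ 3 * ∑ j ∈ Finset.range k, d j * 4 ^ j := by
  have h1 : ∑ j ∈ Finset.range k, 4 ^ j ≤ ∑ j ∈ Finset.range k, d j * 4 ^ j := by
    apply Finset.sum_le_sum
    intro j hj
    calc 4 ^ j = 1 * 4 ^ j := (one_mul _).symm
    _ ≤ d j * 4 ^ j := Nat.mul_le_mul_right _ (hd j (Finset.mem_range.mp hj))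
  have h3 := sum_pow4 k
  omega

lemma digits_inj (k : ℕ) (d e : ℕ → ℕ) (hd : ∀ j, j < k → d j ≤ 2) (he : ∀ j, j < k → e j ≤ 2)
    (hsum : ∑ j ∈ Finset.range k, d j * 4 ^ j = ∑ j ∈ Finset.range k, e j * 4 ^ j) :
    ∀ j, j < k → d j = e j := by
  induction k with
  | zero => omega
  | succ n ih =>
    rw [Finset.sum_range_succ, Finset.sum_range_succ] at hsum
    have h1 : 1 ≤ 4 ^ n := Nat.one_le_pow _ _ (by norm_num)
    have h2 : ∑ j ∈ Finset.range n, d j * 4 ^ j ≤ 4 ^ n - 1 :=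
      digits_le n d (fun j hj => hd j (by omega))
    have h3 : ∑ j ∈ Finset.range n, e j * 4 ^ j ≤ 4 ^ n - 1 :=
      digits_le n e (fun j hj => he j (by omega))
    have hdn : d n ≤ 2 := hd n (by omega)
    have hen : e n ≤ 2 := he n (by omega)
    have key : d n = e n ∧
        ∑ j ∈ Finset.range n, d j * 4 ^ j = ∑ j ∈ Finset.range n, e j * 4 ^ j := by
      interval_cases hdc : d n <;> interval_cases hec : e n <;> omega
    intro j hj
    rcases Nat.lt_or_ge j n with h | h
    · exact ih (fun j hj => hd j (by omega)) (fun j hj => he j (by omega)) key.2 j h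
    · have : j = n := by omega
      rw [this]; exact key.1

lemma cnt_upper_s10 (l u : ℕ) (hl : 1 ≤ l) (hu : 1 ≤ u ∧ u ≤ 4) (v : ℕ → ℕ)
    (hv : ∀ i, i < l → v i = 1 ∨ v i = 2)
    (m : ℕ) (hm : m = u * 4 ^ l + ∑ i ∈ Finset.range l, v i * 4 ^ i) :
    cnt A m ≤ (u + 4) * 2 ^ l := by
  classical
  set g : ℕ → ℕ × Finset ℕ → ℕ :=
    fun k p => p.1 * 4 ^ k + ∑ j ∈ Finset.range k, (if j ∈ p.2 then 2 else 1) * 4 ^ j with hg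
  set Cov : Finset ℕ :=
    ((Finset.range l).biUnion fun k =>
      ((Finset.Icc 1 4) ×ˢ (Finset.range k).powerset).image (g k)) ∪
    ((Finset.Icc 1 u) ×ˢ (Finset.range l).powerset).image (g l) with hCov
  have h4l : 4 ≤ 4 ^ l := by
    calc 4 = 4 ^ 1 := by norm_num
    _ ≤ 4 ^ l := Nat.pow_le_pow_right (by norm_num) hl
  have hvle : ∀ j, j < l → v j ≤ 2 := fun j hj => by rcases hv j hj with h | h <;> omega
  have hm_ub : 3 * m ≤ 3 * (u * 4 ^ l) + 2 * (4 ^ l - 1) := by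
    have := digits_le2 l v hvle
    omega
  have hu4l : u * 4 ^ l ≤ 4 * 4 ^ l := Nat.mul_le_mul_right _ hu.2
  -- subset
  have hsub : A ∩ Set.Iic m ⊆ ↑Cov := by
    rintro n ⟨hnA, hn_le⟩
    simp only [Set.mem_Iic] at hn_le
    obtain ⟨k, hk⟩ := Set.mem_iUnion.mp hnA
    obtain ⟨u', hu', v', hv', hneq⟩ := hk
    have hv'le : ∀ j, j < k → v' j ≤ 2 := fun j hj => by rcases hv' j hj with h | h <;> omega
    have hv'ge : ∀ j, j < k → 1 ≤ v' j := fun j hj => by rcases hv' j hj with h | h <;> omega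
    have hn_lb : 4 ^ k - 1 ≤ 3 * ∑ j ∈ Finset.range k, v' j * 4 ^ j :=
      digits_ge k v' hv'ge
    have hu'k : 4 ^ k ≤ u' * 4 ^ k := by
      calc 4 ^ k = 1 * 4 ^ k := (one_mul _).symm
      _ ≤ u' * 4 ^ k := Nat.mul_le_mul_right _ hu'.1
    have hkl : k ≤ l := by
      by_contra hc
      push_neg at hc
      have h1 : 4 * 4 ^ l ≤ 4 ^ k := by
        calc 4 * 4 ^ l = 4 ^ (l + 1) := by rw [pow_succ]; ring
        _ ≤ 4 ^ k := Nat.pow_le_pow_right (by norm_num) (by omega)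
      omega
    set S : Finset ℕ := (Finset.range k).filter (fun j => v' j = 2) with hS
    have hng : n = g k (u', S) := by
      rw [hneq, hg]
      congr 1
      apply Finset.sum_congr rfl
      intro j hj
      have hjk := Finset.mem_range.mp hj
      rcases hv' j hjk with h | h
      · have : j ∉ S := by simp [hS, h]
        simp [this, h]
      · have : j ∈ S := by simp [hS, h, hjk]
        simp [this, h]
    rcases Nat.lt_or_ge k l with hkl' | hkl'
    · apply Finset.mem_union_left
      apply Finset.mem_biUnion.mpr
      refine ⟨k, Finset.mem_range.mpr hkl', ?_⟩
      apply Finset.mem_image.mpr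
      refine ⟨(u', S), ?_, hng.symm⟩
      simp [Finset.mem_product, Finset.mem_Icc, hu'.1, hu'.2, hS, Finset.filter_subset]
    · have hkeq : k = l := by omega
      subst hkeq
      have hexp : (u + 1) * 4 ^ k = u * 4 ^ k + 4 ^ k := by ring
      have hm_lt : m < (u + 1) * 4 ^ k := by
        have := digits_le k v hvle
        omega
      have hu'u : u' ≤ u := by
        by_contra hc
        push_neg at hc
        have h2 : (u + 1) * 4 ^ k ≤ u' * 4 ^ k := Nat.mul_le_mul_right _ hc
        omega
      apply Finset.mem_union_right
      apply Finset.mem_image.mpr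
      refine ⟨(u', S), ?_, hng.symm⟩
      simp [Finset.mem_product, Finset.mem_Icc, hu'.1, hu'u, hS, Finset.filter_subset]
  -- cardinality
  have hcard : Cov.card ≤ (u + 4) * 2 ^ l := by
    have h1 : Cov.card ≤
        (((Finset.range l).biUnion fun k =>
          ((Finset.Icc 1 4) ×ˢ (Finset.range k).powerset).image (g k)).card) +
        ((((Finset.Icc 1 u) ×ˢ (Finset.range l).powerset).image (g l)).card) :=
      Finset.card_union_le _ _
    have h2 : ((Finset.range l).biUnion fun k =>
          ((Finset.Icc 1 4) ×ˢ (Finset.range k).powerset).image (g k)).card ≤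
        ∑ k ∈ Finset.range l, 4 * 2 ^ k := by
      refine le_trans (Finset.card_biUnion_le) (Finset.sum_le_sum ?_)
      intro k hk
      refine le_trans (Finset.card_image_le) ?_
      rw [Finset.card_product, Finset.card_powerset, Finset.card_range, Nat.card_Icc]
    have h3 : (((Finset.Icc 1 u) ×ˢ (Finset.range l).powerset).image (g l)).card ≤
        u * 2 ^ l := by
      refine le_trans (Finset.card_image_le) ?_
      rw [Finset.card_product, Finset.card_powerset, Finset.card_range, Nat.card_Icc]
      simp
    have h4 : ∑ k ∈ Finset.range l, 4 * 2 ^ k ≤ 4 * 2 ^ l := by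
      rw [← Finset.mul_sum, sum_pow2]
      omega
    have h5 : (u + 4) * 2 ^ l = u * 2 ^ l + 4 * 2 ^ l := by ring
    omega
  calc cnt A m = (A ∩ Set.Iic m).ncard := rfl
  _ ≤ (↑Cov : Set ℕ).ncard := Set.ncard_le_ncard hsub (Cov.finite_toSet)
  _ = Cov.card := Set.ncard_coe_finset _
  _ ≤ (u + 4) * 2 ^ l := hcard

lemma cnt_lower (l u : ℕ) (hl : 1 ≤ l) (hu : 1 ≤ u ∧ u ≤ 4) (v : ℕ → ℕ)
    (hv : ∀ i, i < l → v i = 1 ∨ v i = 2)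
    (m : ℕ) (hm : m = u * 4 ^ l + ∑ j ∈ Finset.range l, v j * 4 ^ j)
    (i : ℕ) (hi : i < l) (hvi : v i = 1) :
    cnt A m + 2 ^ i ≤ cnt A (m + 4 ^ i) := by
  classical
  set low0 : ℕ := ∑ j ∈ Finset.range i, v j * 4 ^ j with hlow0def
  set hiS : ℕ := ∑ j ∈ Finset.Ico (i + 1) l, v j * 4 ^ j with hhiSdef
  have hm' : m = u * 4 ^ l + hiS + 4 ^ i + low0 := by
    have h1 : ∑ j ∈ Finset.Ico 0 (i + 1), v j * 4 ^ j
        + ∑ j ∈ Finset.Ico (i + 1) l, v j * 4 ^ j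
        = ∑ j ∈ Finset.Ico 0 l, v j * 4 ^ j :=
      Finset.sum_Ico_consecutive _ (Nat.zero_le _) (by omega)
    rw [← Finset.range_eq_Ico, ← Finset.range_eq_Ico, Finset.sum_range_succ, hvi] at h1
    omega
  set lowS : Finset ℕ → ℕ :=
    fun S => ∑ j ∈ Finset.range i, (if j ∈ S then 2 else 1) * 4 ^ j with hlowSdef
  set f : Finset ℕ → ℕ :=
    fun S => u * 4 ^ l + hiS + (if lowS S ≤ low0 then 2 else 1) * 4 ^ i + lowS S with hfdef
  set P : Finset (Finset ℕ) := (Finset.range i).powerset with hPdef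
  have h4i : 1 ≤ 4 ^ i := Nat.one_le_pow _ _ (by norm_num)
  have hlow0le : low0 ≤ 4 ^ i - 1 :=
    digits_le i v (fun j hj => by rcases hv j (by omega) with h | h <;> omega)
  have hlowSle : ∀ S, lowS S ≤ 4 ^ i - 1 := fun S =>
    digits_le i _ (fun j hj => by split <;> omega)
  have hrange : ∀ S, m < f S ∧ f S ≤ m + 4 ^ i := by
    intro S
    rw [hm', hfdef]
    simp only []
    have := hlowSle S
    split <;> omega
  -- each f S lies in A
  have hfA : ∀ S ∈ P, f S ∈ A := by
    intro S _
    apply Set.mem_iUnion.mpr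
    refine ⟨l, ?_⟩
    refine ⟨u, hu, fun j => if j < i then (if j ∈ S then 2 else 1)
      else if j = i then (if lowS S ≤ low0 then 2 else 1) else v j, ?_, ?_⟩
    · intro j hj
      by_cases h1 : j < i
      · by_cases h : j ∈ S <;> simp [h1, h]
      · by_cases h2 : j = i
        · by_cases h : lowS S ≤ low0 <;> simp [h1, h2, h]
        · simp only [h1, h2, if_false]; exact hv j hj
    · have hsplit : ∑ j ∈ Finset.Ico 0 (i + 1),
          (if j < i then (if j ∈ S then 2 else 1)
            else if j = i then (if lowS S ≤ low0 then 2 else 1) else v j) * 4 ^ j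
          + ∑ j ∈ Finset.Ico (i + 1) l,
          (if j < i then (if j ∈ S then 2 else 1)
            else if j = i then (if lowS S ≤ low0 then 2 else 1) else v j) * 4 ^ j
          = ∑ j ∈ Finset.Ico 0 l,
          (if j < i then (if j ∈ S then 2 else 1)
            else if j = i then (if lowS S ≤ low0 then 2 else 1) else v j) * 4 ^ j :=
        Finset.sum_Ico_consecutive _ (Nat.zero_le _) (by omega)
      have e1 : ∑ j ∈ Finset.range i,
          (if j < i then (if j ∈ S then 2 else 1)
            else if j = i then (if lowS S ≤ low0 then 2 else 1) else v j) * 4 ^ j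
          = lowS S := by
        rw [hlowSdef]
        apply Finset.sum_congr rfl
        intro j hj
        have : j < i := Finset.mem_range.mp hj
        simp [this]
      have e2 : ∑ j ∈ Finset.Ico (i + 1) l,
          (if j < i then (if j ∈ S then 2 else 1)
            else if j = i then (if lowS S ≤ low0 then 2 else 1) else v j) * 4 ^ j
          = hiS := by
        rw [hhiSdef]
        apply Finset.sum_congr rfl
        intro j hj
        have h1 := (Finset.mem_Ico.mp hj).1
        have h2 : ¬ j < i := by omega
        have h3 : ¬ j = i := by omega
        simp [h2, h3]
      rw [← Finset.range_eq_Ico, ← Finset.range_eq_Ico, Finset.sum_range_succ, e1, e2,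
        if_neg (lt_irrefl i), if_pos rfl] at hsplit
      show u * 4 ^ l + hiS + (if lowS S ≤ low0 then 2 else 1) * 4 ^ i + lowS S = _
      simp only []
      rw [← hsplit]
      ring
  -- injectivity
  have hinj : Set.InjOn f ↑P := by
    intro S hS S' hS' hff
    have hSP : S ∈ P := hS
    have hS'P : S' ∈ P := hS'
    rw [hPdef] at hSP hS'P
    have hSsub := Finset.mem_powerset.mp hSP
    have hS'sub := Finset.mem_powerset.mp hS'P
    rw [hfdef] at hff
    simp only [] at hff
    have hb1 := hlowSle S
    have hb2 := hlowSle S'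
    have hlows : lowS S = lowS S' := by
      by_cases h1 : lowS S ≤ low0 <;> by_cases h2 : lowS S' ≤ low0 <;>
        simp [h1, h2] at hff <;> omega
    have hdig := digits_inj i (fun j => if j ∈ S then 2 else 1) (fun j => if j ∈ S' then 2 else 1)
      (fun j hj => by by_cases h : j ∈ S <;> simp [h]) 
      (fun j hj => by by_cases h : j ∈ S' <;> simp [h]) hlows
    ext j
    by_cases hj : j < i
    · have := hdig j hj
      by_cases h1 : j ∈ S <;> by_cases h2 : j ∈ S' <;> simp [h1, h2] at this ⊢
    · constructor
      · intro h; exact absurd (Finset.mem_range.mp (hSsub h)) hj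
      · intro h; exact absurd (Finset.mem_range.mp (hS'sub h)) hj
  -- counting
  set B : Set ℕ := A ∩ Set.Iic m with hB
  set C : Set ℕ := ↑(P.image f) with hC
  have hBfin : B.Finite := Set.Finite.inter_of_right (Set.finite_Iic m) A
  have hCfin : C.Finite := (P.image f).finite_toSet
  have hdisj : Disjoint B C := by
    rw [Set.disjoint_left]
    intro x hx hxC
    obtain ⟨S, hSP, hfS⟩ := Finset.mem_image.mp (by simpa [hC] using hxC)
    have := (hrange S).1
    have hxm : x ≤ m := hx.2
    omega
  have hsub : B ∪ C ⊆ A ∩ Set.Iic (m + 4 ^ i) := by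
    rintro x (hx | hx)
    · exact ⟨hx.1, le_trans hx.2 (Nat.le_add_right _ _)⟩
    · obtain ⟨S, hSP, hfS⟩ := Finset.mem_image.mp (by simpa [hC] using hx)
      refine ⟨hfS ▸ hfA S hSP, ?_⟩
      have := (hrange S).2
      simp only [Set.mem_Iic]
      omega
  have hCcard : C.ncard = 2 ^ i := by
    rw [hC, Set.ncard_coe_finset, Finset.card_image_of_injOn hinj, hPdef,
      Finset.card_powerset, Finset.card_range]
  calc cnt A m + 2 ^ i = B.ncard + C.ncard := by rw [hCcard]; rfl
  _ = (B ∪ C).ncard := (Set.ncard_union_eq hdisj hBfin hCfin).symm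
  _ ≤ (A ∩ Set.Iic (m + 4 ^ i)).ncard :=
      Set.ncard_le_ncard hsub (Set.Finite.inter_of_right (Set.finite_Iic _) A)
  _ = cnt A (m + 4 ^ i) := rfl

theorem stmt_10 (l u : ℕ) (hl : 1 ≤ l) (hu : 1 ≤ u ∧ u ≤ 4) (v : ℕ → ℕ)
    (hv : ∀ i, i < l → v i = 1 ∨ v i = 2)
    (m : ℕ) (hm : m = u * 4 ^ l + ∑ i ∈ Finset.range l, v i * 4 ^ i)
    (i : ℕ) (hi : i < l) (hvi : v i = 1) :
    (cnt A (m + 4 ^ i) : ℝ) / Real.sqrt (m + 4 ^ i)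
      > (cnt A m : ℝ) / Real.sqrt m := by
  have hNle : cnt A m ≤ (u + 4) * 2 ^ l := cnt_upper_s10 l u hl hu v hv m hm
  have hN' : cnt A m + 2 ^ i ≤ cnt A (m + 4 ^ i) := cnt_lower l u hl hu v hv m hm i hi hvi
  set N := cnt A m with hN
  set N' := cnt A (m + 4 ^ i) with hN'def
  have h4l : 4 ≤ 4 ^ l := by
    calc (4:ℕ) = 4 ^ 1 := by norm_num
    _ ≤ 4 ^ l := Nat.pow_le_pow_right (by norm_num) hl
  have hu4l : 4 ^ l ≤ u * 4 ^ l := by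
    calc (4:ℕ) ^ l = 1 * 4 ^ l := (one_mul _).symm
    _ ≤ u * 4 ^ l := Nat.mul_le_mul_right _ hu.1
  have hm1 : 4 ≤ m := by omega
  have hpow2 : (2:ℕ) ^ l * 2 ^ l = 4 ^ l := by
    rw [← mul_pow]; norm_num
  have hm4 : (u + 4) * 4 ^ l ≤ 4 * m := by
    have hge := digits_ge l v (fun j hj => by rcases hv j hj with h | h <;> omega)
    have hexp : (u + 4) * 4 ^ l = u * 4 ^ l + 4 * 4 ^ l := by ring
    omega
  have h2i : 2 * 2 ^ i ≤ 2 ^ l := by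
    calc 2 * 2 ^ i = 2 ^ (i + 1) := by rw [pow_succ]; ring
    _ ≤ 2 ^ l := Nat.pow_le_pow_right (by norm_num) (by omega)
  have h2m : N * 2 ^ i * 2 ≤ 4 * m := by
    calc N * 2 ^ i * 2 = N * (2 * 2 ^ i) := by ring
    _ ≤ ((u + 4) * 2 ^ l) * 2 ^ l := Nat.mul_le_mul hNle h2i
    _ = (u + 4) * 4 ^ l := by rw [mul_assoc, hpow2]
    _ ≤ 4 * m := hm4
  have h4eq : (4:ℕ) ^ i = 2 ^ i * 2 ^ i := by rw [← mul_pow]; norm_num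
  have hkey : N ^ 2 * (m + 4 ^ i) < (N + 2 ^ i) ^ 2 * m := by
    have hstep : N * 2 ^ i * (N * 2 ^ i) ≤ 2 * m * (N * 2 ^ i) :=
      Nat.mul_le_mul_right _ (by omega)
    have hpos : 0 < 4 ^ i * m := by positivity
    nlinarith [hstep, hpos]
  -- real part
  have hm0 : (0:ℝ) < (m:ℝ) := by exact_mod_cast (by omega : 0 < m)
  have hs1 : 0 < Real.sqrt m := Real.sqrt_pos.mpr hm0
  have hs2 : 0 < Real.sqrt ((m:ℝ) + 4 ^ i) := Real.sqrt_pos.mpr (by positivity)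
  rw [gt_iff_lt, div_lt_div_iff₀ hs1 hs2]
  have key2 : (N:ℝ) * Real.sqrt ((m:ℝ) + 4 ^ i) < ((N:ℝ) + 2 ^ i) * Real.sqrt m := by
    have e1 : (N:ℝ) * Real.sqrt ((m:ℝ) + 4 ^ i)
        = Real.sqrt ((N:ℝ) ^ 2 * ((m:ℝ) + 4 ^ i)) := by
      rw [Real.sqrt_mul (by positivity), Real.sqrt_sq (by positivity)]
    have e2 : ((N:ℝ) + 2 ^ i) * Real.sqrt m
        = Real.sqrt (((N:ℝ) + 2 ^ i) ^ 2 * (m:ℝ)) := by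
      rw [Real.sqrt_mul (by positivity), Real.sqrt_sq (by positivity)]
    rw [e1, e2]
    apply Real.sqrt_lt_sqrt (by positivity)
    exact_mod_cast hkey
  calc (N:ℝ) * Real.sqrt ((m:ℝ) + 4 ^ i) < ((N:ℝ) + 2 ^ i) * Real.sqrt m := key2
  _ ≤ (N':ℝ) * Real.sqrt m := by
    apply mul_le_mul_of_nonneg_right _ (Real.sqrt_nonneg _)
    exact_mod_cast hN'
end

section
/- Let T_l = { u·4^l + Σ_{i=0}^{l-1} v_i·4^i : u ∈ {1,2,3,4}, v_i ∈ {1,2} } and A = ⋃_{l≥0} T_l. For every integer l ≥ 0 and every u ∈ {1,2,3,4}, setting q_{u,l} = u·4^l + Σ_{i=0}^{l-1} 2·4^i, the number of elements of A that are at most q_{u,l} equals (u+4)·2^l − 4; moreover q_{u,l} = (u + 2/3)·4^l − 2/3. -/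
/-- Finset version of `T l` with `u ∈ {1,…,k}`. -/
def Fu (k : ℕ) : ℕ → Finset ℕ
  | 0 => (Finset.range k).image (· + 1)
  | l+1 => ((Fu k l).image (fun m => 4*m+1)) ∪ ((Fu k l).image (fun m => 4*m+2))

/-- max of `Fu k l`. -/
def qq (k : ℕ) : ℕ → ℕ
  | 0 => k
  | l+1 => 4 * qq k l + 2

/-- min of `Fu k l` (independent of k). -/
def LB : ℕ → ℕ
  | 0 => 1
  | l+1 => 4 * LB l + 1

lemma qq_eq (k l : ℕ) : qq k l = k * 4 ^ l + ∑ i ∈ Finset.range l, 2 * 4 ^ i := by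
  induction l with
  | zero => simp [qq]
  | succ l ih =>
    rw [qq, ih, Finset.sum_range_succ' (fun i => 2 * 4 ^ i)]
    have : ∑ i ∈ Finset.range l, 2 * 4 ^ (i+1) = 4 * ∑ i ∈ Finset.range l, 2 * 4 ^ i := by
      rw [Finset.mul_sum]; apply Finset.sum_congr rfl; intros; ring
    rw [this]; ring

lemma mem_Fu_T (l : ℕ) : ∀ n, n ∈ Fu 4 l ↔ n ∈ T l := by
  induction l with
  | zero =>
    intro n
    constructor
    · intro h
      simp only [Fu, Finset.mem_image, Finset.mem_range] at h
      obtain ⟨i, hi, rfl⟩ := h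
      exact ⟨i+1, ⟨by omega, by omega⟩, fun _ => 1, fun i h => absurd h (by omega), by simp⟩
    · rintro ⟨u, ⟨h1, h4⟩, v, -, rfl⟩
      simp only [Fu, Finset.mem_image, Finset.mem_range]
      exact ⟨u - 1, by omega, by simp; omega⟩
  | succ l ih =>
    intro n
    have key : ∀ (u : ℕ) (v : ℕ → ℕ),
        u * 4 ^ (l+1) + ∑ i ∈ Finset.range (l+1), v i * 4 ^ i
        = 4 * (u * 4 ^ l + ∑ i ∈ Finset.range l, v (i+1) * 4 ^ i) + v 0 := by
      intro u v
      rw [Finset.sum_range_succ' (fun i => v i * 4 ^ i)]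
      have : ∑ i ∈ Finset.range l, v (i+1) * 4 ^ (i+1)
          = 4 * ∑ i ∈ Finset.range l, v (i+1) * 4 ^ i := by
        rw [Finset.mul_sum]; apply Finset.sum_congr rfl; intros; ring
      rw [this]; ring
    constructor
    · intro h
      simp only [Fu, Finset.mem_union, Finset.mem_image] at h
      rcases h with ⟨m, hm, rfl⟩ | ⟨m, hm, rfl⟩ <;>
        obtain ⟨u, hu, v, hv, rfl⟩ := (ih m).mp hm
      · refine ⟨u, hu, fun i => if i = 0 then 1 else v (i-1), ?_, ?_⟩
        · intro i hi
          rcases Nat.eq_zero_or_pos i with rfl | hi0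
          · simp
          · have hne : i ≠ 0 := by omega
            simp only [if_neg hne]
            exact hv (i-1) (by omega)
        · rw [key]; simp
      · refine ⟨u, hu, fun i => if i = 0 then 2 else v (i-1), ?_, ?_⟩
        · intro i hi
          rcases Nat.eq_zero_or_pos i with rfl | hi0
          · simp
          · have hne : i ≠ 0 := by omega
            simp only [if_neg hne]
            exact hv (i-1) (by omega)
        · rw [key]; simp
    · rintro ⟨u, hu, v, hv, rfl⟩
      rw [key]
      have hm : u * 4 ^ l + ∑ i ∈ Finset.range l, v (i+1) * 4 ^ i ∈ Fu 4 l :=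
        (ih _).mpr ⟨u, hu, fun i => v (i+1), fun i hi => hv (i+1) (by omega), rfl⟩
      rcases hv 0 (by omega) with h0 | h0 <;> rw [h0] <;>
        simp only [Fu, Finset.mem_union, Finset.mem_image]
      · exact Or.inl ⟨_, hm, rfl⟩
      · exact Or.inr ⟨_, hm, rfl⟩

lemma card_Fu (k l : ℕ) : (Fu k l).card = k * 2 ^ l := by
  induction l with
  | zero =>
    simp [Fu, Finset.card_image_of_injective _ (add_left_injective 1)]
  | succ l ih =>
    have h1 : Function.Injective (fun m => 4*m+1) := fun a b h => by simp only [] at h; omega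
    have h2 : Function.Injective (fun m => 4*m+2) := fun a b h => by simp only [] at h; omega
    have hd : Disjoint ((Fu k l).image (fun m => 4*m+1)) ((Fu k l).image (fun m => 4*m+2)) := by
      simp only [Finset.disjoint_left, Finset.mem_image]
      rintro a ⟨x, _, rfl⟩ ⟨y, _, h⟩; omega
    rw [Fu, Finset.card_union_of_disjoint hd, Finset.card_image_of_injective _ h1,
      Finset.card_image_of_injective _ h2, ih]
    ring

lemma Fu_le_qq {k l n : ℕ} (h : n ∈ Fu k l) : n ≤ qq k l := by
  induction l generalizing n with
  | zero =>
    simp only [Fu, Finset.mem_image, Finset.mem_range] at h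
    obtain ⟨i, hi, rfl⟩ := h; simpa [qq] using hi
  | succ l ih =>
    simp only [Fu, Finset.mem_union, Finset.mem_image] at h
    rcases h with ⟨m, hm, rfl⟩ | ⟨m, hm, rfl⟩ <;> have := ih hm <;> simp [qq] <;> omega

lemma LB_le_Fu {k l n : ℕ} (h : n ∈ Fu k l) : LB l ≤ n := by
  induction l generalizing n with
  | zero =>
    simp only [Fu, Finset.mem_image, Finset.mem_range] at h
    obtain ⟨i, hi, rfl⟩ := h; simp [LB]
  | succ l ih =>
    simp only [Fu, Finset.mem_union, Finset.mem_image] at h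
    rcases h with ⟨m, hm, rfl⟩ | ⟨m, hm, rfl⟩ <;> have := ih hm <;> simp [LB] <;> omega

lemma Fu_mono {k k' : ℕ} (h : k ≤ k') (l : ℕ) : Fu k l ⊆ Fu k' l := by
  induction l with
  | zero =>
    simp only [Fu]
    exact Finset.image_subset_image (Finset.range_subset_range.mpr h)
  | succ l ih =>
    simp only [Fu]
    exact Finset.union_subset_union (Finset.image_subset_image ih) (Finset.image_subset_image ih)

lemma Fu_filter {u l n : ℕ} (hu : u ≤ 4) (hn : n ∈ Fu 4 l) (hq : n ≤ qq u l) : n ∈ Fu u l := by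
  induction l generalizing n with
  | zero =>
    simp only [Fu, Finset.mem_image, Finset.mem_range] at hn ⊢
    obtain ⟨i, hi, rfl⟩ := hn
    exact ⟨i, by simpa [qq] using hq, rfl⟩
  | succ l ih =>
    simp only [Fu, Finset.mem_union, Finset.mem_image] at hn ⊢
    simp only [qq] at hq
    rcases hn with ⟨m, hm, rfl⟩ | ⟨m, hm, rfl⟩
    · exact Or.inl ⟨m, ih hm (by omega), rfl⟩
    · exact Or.inr ⟨m, ih hm (by omega), rfl⟩

lemma qq_mono_k {k k' : ℕ} (h : k ≤ k') (l : ℕ) : qq k l ≤ qq k' l := by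
  induction l with
  | zero => simpa [qq]
  | succ l ih => simp only [qq]; omega

lemma qq_mono_l (k : ℕ) {m l : ℕ} (h : m ≤ l) : qq k m ≤ qq k l := by
  induction l with
  | zero => simp_all
  | succ l ih =>
    rcases Nat.lt_or_ge m (l+1) with h' | h'
    · have := ih (by omega); simp only [qq]; omega
    · have : m = l + 1 := by omega
      simp [this]

lemma qq4_le : ∀ m : ℕ, qq 4 m ≤ qq 1 (m+1) := by
  intro m
  induction m with
  | zero => simp [qq]
  | succ m ih => simp only [qq] at *; omega

lemma LB_mono {m l : ℕ} (h : m ≤ l) : LB m ≤ LB l := by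
  induction l with
  | zero => simp_all
  | succ l ih =>
    rcases Nat.lt_or_ge m (l+1) with h' | h'
    · have := ih (by omega); simp only [LB]; omega
    · have : m = l + 1 := by omega
      simp [this]

lemma qq4_lt_LB (l : ℕ) : qq 4 l < LB (l+1) := by
  induction l with
  | zero => simp [qq, LB]
  | succ l ih => simp only [qq, LB] at *; omega

lemma Fu_disjoint {m m' : ℕ} (h : m < m') : Disjoint (Fu 4 m) (Fu 4 m') := by
  rw [Finset.disjoint_left]
  intro n hn hn'
  have h1 := Fu_le_qq hn
  have h2 := LB_le_Fu hn'
  have h3 := qq4_lt_LB m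
  have h4 := LB_mono (show m + 1 ≤ m' by omega)
  omega

lemma sum_four_two_pow (l : ℕ) : ∑ m ∈ Finset.range l, 4 * 2 ^ m = 4 * 2 ^ l - 4 := by
  induction l with
  | zero => simp
  | succ l ih =>
    rw [Finset.sum_range_succ, ih]
    have h1 : 1 ≤ 2 ^ l := Nat.one_le_two_pow
    have h2 : (2:ℕ) ^ (l+1) = 2 ^ l * 2 := pow_succ 2 l
    omega

theorem stmt_11 (l u : ℕ) (hu : 1 ≤ u ∧ u ≤ 4)
    (q : ℕ) (hq : q = u * 4 ^ l + ∑ i ∈ Finset.range l, 2 * 4 ^ i) :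
    cnt A q = (u + 4) * 2 ^ l - 4 ∧
      (q : ℝ) = ((u : ℝ) + 2 / 3) * 4 ^ l - 2 / 3 := by
  obtain ⟨hu1, hu4⟩ := hu
  have hq' : q = qq u l := by rw [hq, qq_eq]
  constructor
  · have hset : A ∩ Set.Iic q = ↑(((Finset.range l).biUnion (Fu 4)) ∪ Fu u l) := by
      ext n
      simp only [Set.mem_inter_iff, Set.mem_Iic, A, Set.mem_iUnion, Finset.coe_union,
        Set.mem_union, Finset.mem_coe, Finset.mem_biUnion, Finset.mem_range]
      constructor
      · rintro ⟨⟨m, hm⟩, hn⟩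
        have hm' : n ∈ Fu 4 m := (mem_Fu_T m n).mpr hm
        rcases lt_trichotomy m l with h | rfl | h
        · exact Or.inl ⟨m, h, hm'⟩
        · exact Or.inr (Fu_filter hu4 hm' (hq' ▸ hn))
        · exfalso
          have h1 := LB_le_Fu hm'
          have h2 := LB_mono (show l+1 ≤ m by omega)
          have h3 := qq4_lt_LB l
          have h4 := qq_mono_k hu4 l
          have h5 := Fu_le_qq hm'
          omega
      · rintro (⟨m, hml, hm⟩ | hm)
        · refine ⟨⟨m, (mem_Fu_T m n).mp hm⟩, ?_⟩
          have h1 := Fu_le_qq hm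
          have h2 := qq4_le m
          have h3 := qq_mono_k hu1 (m+1)
          have h4 := qq_mono_l u (show m+1 ≤ l by omega)
          omega
        · exact ⟨⟨l, (mem_Fu_T l n).mp (Fu_mono hu4 l hm)⟩, hq' ▸ Fu_le_qq hm⟩
    rw [cnt, hset, Set.ncard_coe_finset]
    have hdisj : Disjoint ((Finset.range l).biUnion (Fu 4)) (Fu u l) := by
      rw [Finset.disjoint_left]
      intro n hn hn'
      obtain ⟨m, hml, hm⟩ := Finset.mem_biUnion.mp hn
      exact Finset.disjoint_left.mp (Fu_disjoint (Finset.mem_range.mp hml)) hm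
        (Fu_mono hu4 l hn')
    have hpair : ∀ x ∈ Finset.range l, ∀ y ∈ Finset.range l, x ≠ y →
        Disjoint (Fu 4 x) (Fu 4 y) := by
      intro x _ y _ hxy
      rcases hxy.lt_or_gt with h | h
      · exact Fu_disjoint h
      · exact (Fu_disjoint h).symm
    rw [Finset.card_union_of_disjoint hdisj, Finset.card_biUnion hpair]
    simp only [card_Fu]
    rw [sum_four_two_pow]
    have h1 : 1 ≤ 2 ^ l := Nat.one_le_two_pow
    have h2 : (u + 4) * 2 ^ l = u * 2 ^ l + 4 * 2 ^ l := by ring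
    omega
  · rw [hq]
    push_cast
    have h4 : (4:ℝ) ≠ 1 := by norm_num
    have hs : ∑ i ∈ Finset.range l, (2:ℝ) * 4 ^ i = 2 * (((4:ℝ) ^ l - 1) / (4 - 1)) := by
      rw [← Finset.mul_sum, geom_sum_eq h4]
    rw [hs]; ring
end
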